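/- arXiv:1302.5261 — 3 statements merged into one kernel-verified Lean document; each statement's English description precedes it below -/
import Mathlib

section
/- Sturm–Liouville differential equation for F_{lm}: for all integers l ≥ 1, −l ≤ m ≤ l, and all x ∈ (−1, 1), (d/dx)[(1 − x^2) F_{lm}'(x)] − ((m^2 − 2mx + 1)/(1 − x^2)) F_{lm}(x) = −l(l + 1) F_{lm}(x). -/
open MeasureTheory

/-- The (unnormalized) associated Legendre function
`P_l^m(x) = ((−1)^m / (2^l l!)) (1 − x^2)^{m/2} (d/dx)^{l+m} (x^2 − 1)^l`. -/
noncomputable def Plm (l m : ℤ) (x : ℝ) : ℝ :=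
  ((-1 : ℝ) ^ m / ((2 : ℝ) ^ l * (l.toNat.factorial : ℝ))) *
    (1 - x ^ 2) ^ ((m : ℝ) / 2) *
    iteratedDeriv (l + m).toNat (fun y : ℝ => (y ^ 2 - 1) ^ l) x

/-- The normalization factor `c_{lm} = √((2l+1)/2 · (l−m)!/(l+m)!)`. -/
noncomputable def clm (l m : ℤ) : ℝ :=
  Real.sqrt ((2 * (l : ℝ) + 1) / 2 * ((l - m).toNat.factorial : ℝ) /
    ((l + m).toNat.factorial : ℝ))

/-- The normalized associated Legendre function `U_{lm} = c_{lm} P_l^m`,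
with the convention `U_{lm} = 0` when `|m| > l`. -/
noncomputable def Ulm (l m : ℤ) (x : ℝ) : ℝ :=
  if |m| ≤ l then clm l m * Plm l m x else 0

/-- The function of Sheppard and Török
`F_{lm}(x) = (1/√(l(l+1))) [√(1−x²) U_{lm}'(x) − (m/√(1−x²)) U_{lm}(x)]`. -/
noncomputable def Flm (l m : ℤ) (x : ℝ) : ℝ :=
  (1 / Real.sqrt ((l : ℝ) * ((l : ℝ) + 1))) *
    (Real.sqrt (1 - x ^ 2) * deriv (Ulm l m) x -
      ((m : ℝ) / Real.sqrt (1 - x ^ 2)) * Ulm l m x)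

namespace FlmAux

noncomputable def w (L : ℕ) : ℝ → ℝ := fun y => (y ^ 2 - 1) ^ L

lemma contDiff_w (L : ℕ) : ContDiff ℝ (⊤:ℕ∞) (w L) :=
  ((contDiff_id.pow 2).sub contDiff_const).pow L

lemma diff_iter (L k : ℕ) : Differentiable ℝ (iteratedDeriv k (w L)) := by
  rw [iteratedDeriv_eq_iterate]
  exact (ContDiff.iterate_deriv k (mod_cast contDiff_w L)).differentiable (by simp)

lemma hasDerivAt_iter (L k : ℕ) (x : ℝ) :
    HasDerivAt (iteratedDeriv k (w L)) (iteratedDeriv (k + 1) (w L) x) x := by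
  rw [iteratedDeriv_succ]
  exact (diff_iter L k x).hasDerivAt

lemma sqsub (x : ℝ) : HasDerivAt (fun y : ℝ => y ^ 2 - 1) (2 * x) x := by
  simpa using ((hasDerivAt_pow 2 x).sub_const 1)

lemma rec0 (L : ℕ) (hL : 1 ≤ L) (x : ℝ) :
    (x ^ 2 - 1) * iteratedDeriv 1 (w L) x = 2 * L * x * iteratedDeriv 0 (w L) x := by
  have h : HasDerivAt (w L) ((L : ℝ) * (x ^ 2 - 1) ^ (L - 1) * (2 * x)) x :=
    (sqsub x).pow L
  rw [iteratedDeriv_one, iteratedDeriv_zero, h.deriv]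
  have hp : (x ^ 2 - 1) * (x ^ 2 - 1) ^ (L - 1) = (x ^ 2 - 1) ^ L := by
    rw [← pow_succ', Nat.sub_add_cancel hL]
  calc (x ^ 2 - 1) * ((L : ℝ) * (x ^ 2 - 1) ^ (L - 1) * (2 * x))
      = 2 * L * x * ((x ^ 2 - 1) * (x ^ 2 - 1) ^ (L - 1)) := by ring
    _ = 2 * L * x * w L x := by rw [hp]; rfl

lemma reck (L : ℕ) (hL : 1 ≤ L) : ∀ k : ℕ, ∀ x : ℝ,
    (x ^ 2 - 1) * iteratedDeriv (k + 2) (w L) x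
      = (2 * L - 2 * (k + 1)) * x * iteratedDeriv (k + 1) (w L) x
        + ((k + 1) * (2 * L - k)) * iteratedDeriv k (w L) x := by
  intro k
  induction k with
  | zero =>
    intro x
    have hfun : (fun x : ℝ => (x ^ 2 - 1) * iteratedDeriv 1 (w L) x)
        = fun x : ℝ => 2 * L * x * iteratedDeriv 0 (w L) x := funext (rec0 L hL)
    have h1 : HasDerivAt (fun x : ℝ => (x ^ 2 - 1) * iteratedDeriv 1 (w L) x)
        (2 * x * iteratedDeriv 1 (w L) x + (x ^ 2 - 1) * iteratedDeriv 2 (w L) x) x :=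
      (sqsub x).mul (hasDerivAt_iter L 1 x)
    have h2 : HasDerivAt (fun x : ℝ => 2 * L * x * iteratedDeriv 0 (w L) x)
        (2 * L * iteratedDeriv 0 (w L) x + 2 * L * x * iteratedDeriv 1 (w L) x) x := by
      have := ((hasDerivAt_id x).const_mul (2 * (L:ℝ))).mul (hasDerivAt_iter L 0 x)
      refine this.congr_deriv ?_; simp only [id_eq]; ring
    have heq := (hfun ▸ h1).unique h2
    push_cast
    linear_combination heq
  | succ k ih =>
    intro x
    have hfun : (fun x : ℝ => (x ^ 2 - 1) * iteratedDeriv (k + 2) (w L) x)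
        = fun x : ℝ => (2 * L - 2 * (k + 1)) * x * iteratedDeriv (k + 1) (w L) x
            + ((k + 1) * (2 * L - k)) * iteratedDeriv k (w L) x := funext ih
    have h1 : HasDerivAt (fun x : ℝ => (x ^ 2 - 1) * iteratedDeriv (k + 2) (w L) x)
        (2 * x * iteratedDeriv (k + 2) (w L) x + (x ^ 2 - 1) * iteratedDeriv (k + 3) (w L) x) x :=
      (sqsub x).mul (hasDerivAt_iter L (k + 2) x)
    have h2 : HasDerivAt (fun x : ℝ => (2 * L - 2 * (k + 1)) * x * iteratedDeriv (k + 1) (w L) x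
            + ((k + 1) * (2 * L - k)) * iteratedDeriv k (w L) x)
        ((2 * L - 2 * (k + 1)) * iteratedDeriv (k + 1) (w L) x
          + (2 * L - 2 * (k + 1)) * x * iteratedDeriv (k + 2) (w L) x
          + ((k + 1) * (2 * L - k)) * iteratedDeriv (k + 1) (w L) x) x := by
      have := (((hasDerivAt_id x).const_mul ((2 * (L:ℝ) - 2 * (k + 1)))).mul
        (hasDerivAt_iter L (k + 1) x)).add ((hasDerivAt_iter L k x).const_mul
        (((k:ℝ) + 1) * (2 * L - k)))
      refine this.congr_deriv ?_; simp only [id_eq]; ring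
    have heq := (hfun ▸ h1).unique h2
    push_cast
    push_cast at heq
    linear_combination heq

/-! ### The associated Legendre layer -/

noncomputable def G (l m : ℤ) (j : ℕ) : ℝ → ℝ :=
  iteratedDeriv ((l + m).toNat + j) (w l.toNat)

noncomputable def U (l m : ℤ) : ℝ → ℝ := fun x =>
  (1 - x ^ 2) ^ ((m:ℝ)/2) * G l m 0 x

noncomputable def U1 (l m : ℤ) : ℝ → ℝ := fun x =>
  (-(m:ℝ) * x * (1 - x ^ 2) ^ ((m:ℝ)/2 - 1)) * G l m 0 x
    + (1 - x ^ 2) ^ ((m:ℝ)/2) * G l m 1 x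

noncomputable def U2 (l m : ℤ) : ℝ → ℝ := fun x =>
  (-(m:ℝ) * (1 - x ^ 2) ^ ((m:ℝ)/2 - 1)
      + 2 * (m:ℝ) * ((m:ℝ)/2 - 1) * x ^ 2 * (1 - x ^ 2) ^ ((m:ℝ)/2 - 2)) * G l m 0 x
    + 2 * (-(m:ℝ) * x * (1 - x ^ 2) ^ ((m:ℝ)/2 - 1)) * G l m 1 x
    + (1 - x ^ 2) ^ ((m:ℝ)/2) * G l m 2 x

lemma hasDerivAt_G (l m : ℤ) (j : ℕ) (x : ℝ) :
    HasDerivAt (G l m j) (G l m (j + 1) x) x :=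
  hasDerivAt_iter l.toNat ((l + m).toNat + j) x

lemma hasDerivAt_base (x : ℝ) : HasDerivAt (fun y : ℝ => 1 - y ^ 2) (-(2 * x)) x := by
  simpa using ((hasDerivAt_pow 2 x).const_sub 1)

lemma hasDerivAt_uu (m : ℤ) (x : ℝ) (hs : 0 < 1 - x ^ 2) :
    HasDerivAt (fun y : ℝ => (1 - y ^ 2) ^ ((m:ℝ)/2))
      (-(m:ℝ) * x * (1 - x ^ 2) ^ ((m:ℝ)/2 - 1)) x := by
  have := (hasDerivAt_base x).rpow_const (p := (m:ℝ)/2) (Or.inl hs.ne')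
  convert this using 1
  ring

lemma hasDerivAt_U (l m : ℤ) (x : ℝ) (hs : 0 < 1 - x ^ 2) :
    HasDerivAt (U l m) (U1 l m x) x :=
  (hasDerivAt_uu m x hs).mul (hasDerivAt_G l m 0 x)

lemma hasDerivAt_U1 (l m : ℤ) (x : ℝ) (hs : 0 < 1 - x ^ 2) :
    HasDerivAt (U1 l m) (U2 l m x) x := by
  have hr : HasDerivAt (fun y : ℝ => (1 - y ^ 2) ^ ((m:ℝ)/2 - 1))
      (-(2 * x) * ((m:ℝ)/2 - 1) * (1 - x ^ 2) ^ ((m:ℝ)/2 - 2)) x := by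
    have := (hasDerivAt_base x).rpow_const (p := (m:ℝ)/2 - 1) (Or.inl hs.ne')
    rw [show (m:ℝ)/2 - 1 - 1 = (m:ℝ)/2 - 2 by ring] at this
    exact this
  have hc : HasDerivAt (fun y : ℝ => -(m:ℝ) * y * (1 - y ^ 2) ^ ((m:ℝ)/2 - 1))
      ((-(m:ℝ)) * (1 - x ^ 2) ^ ((m:ℝ)/2 - 1)
        + (-(m:ℝ) * x) * (-(2 * x) * ((m:ℝ)/2 - 1) * (1 - x ^ 2) ^ ((m:ℝ)/2 - 2))) x := by
    have hmy : HasDerivAt (fun y : ℝ => -(m:ℝ) * y) (-(m:ℝ)) x := by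
      simpa using (hasDerivAt_id x).const_mul (-(m:ℝ))
    exact hmy.mul hr
  have := (hc.mul (hasDerivAt_G l m 0 x)).add
    ((hasDerivAt_uu m x hs).mul (hasDerivAt_G l m 1 x))
  refine this.congr_deriv ?_
  simp only [U2]
  ring

lemma ode (l m : ℤ) (hl : 1 ≤ l) (hm₁ : -l ≤ m) (hm₂ : m ≤ l) (x : ℝ)
    (hs : 0 < 1 - x ^ 2) :
    (1 - x ^ 2) * U2 l m x
      = 2 * x * U1 l m x - ((l:ℝ) * ((l:ℝ) + 1)) * U l m x
        + (m:ℝ) ^ 2 * U l m x / (1 - x ^ 2) := by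
  have hL : 1 ≤ l.toNat := by omega
  have hLr : ((l.toNat : ℕ) : ℝ) = (l : ℝ) := by
    exact_mod_cast congrArg (Int.cast : ℤ → ℝ) (Int.toNat_of_nonneg (by omega : (0:ℤ) ≤ l))
  have hnr : (((l + m).toNat : ℕ) : ℝ) = (l : ℝ) + (m : ℝ) := by
    exact_mod_cast congrArg (Int.cast : ℤ → ℝ) (Int.toNat_of_nonneg (by omega : (0:ℤ) ≤ l + m))
  have R1 := reck l.toNat hL (l + m).toNat x
  rw [hLr, hnr] at R1
  have hx2 : x ^ 2 - 1 ≠ 0 := by nlinarith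
  have hg2 : G l m 2 x
      = ((2 * (l:ℝ) - 2 * ((l:ℝ) + (m:ℝ) + 1)) * x * G l m 1 x
        + (((l:ℝ) + (m:ℝ) + 1) * (2 * (l:ℝ) - ((l:ℝ) + (m:ℝ)))) * G l m 0 x) / (x ^ 2 - 1) := by
    rw [eq_div_iff hx2]
    simp only [G, Nat.add_zero]
    linear_combination R1
  have hA1 : (1 - x ^ 2) ^ ((m:ℝ)/2 - 1) = (1 - x ^ 2) ^ ((m:ℝ)/2) / (1 - x ^ 2) := by
    rw [Real.rpow_sub hs, Real.rpow_one]
  have hA2 : (1 - x ^ 2) ^ ((m:ℝ)/2 - 2) = (1 - x ^ 2) ^ ((m:ℝ)/2) / (1 - x ^ 2) ^ 2 := by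
    rw [Real.rpow_sub hs, show ((2:ℝ)) = ((2:ℕ):ℝ) by norm_num, Real.rpow_natCast]
  simp only [U, U1, U2, hA1, hA2, hg2]
  field_simp
  ring


/-! ### The Sheppard–Torok layer -/

noncomputable def K0 (l m : ℤ) : ℝ :=
  Real.sqrt ((2 * (l : ℝ) + 1) / 2 * ((l - m).toNat.factorial : ℝ) /
    ((l + m).toNat.factorial : ℝ)) * ((-1 : ℝ) ^ m / ((2 : ℝ) ^ l * (l.toNat.factorial : ℝ)))

noncomputable def W' (l m : ℤ) : ℝ → ℝ := fun x =>
  Real.sqrt (1 - x ^ 2) * (K0 l m * U1 l m x)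
    - ((m:ℝ) / Real.sqrt (1 - x ^ 2)) * (K0 l m * U l m x)

noncomputable def Wd (l m : ℤ) : ℝ → ℝ := fun x =>
  (-x / Real.sqrt (1 - x ^ 2)) * (K0 l m * U1 l m x)
    + Real.sqrt (1 - x ^ 2) * (K0 l m * U2 l m x)
    - ((m:ℝ) * x / (Real.sqrt (1 - x ^ 2)) ^ 3) * (K0 l m * U l m x)
    - ((m:ℝ) / Real.sqrt (1 - x ^ 2)) * (K0 l m * U1 l m x)

lemma hasDerivAt_sigma (x : ℝ) (hs : 0 < 1 - x ^ 2) :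
    HasDerivAt (fun y : ℝ => Real.sqrt (1 - y ^ 2))
      (1 / (2 * Real.sqrt (1 - x ^ 2)) * (-(2 * x))) x :=
  (Real.hasDerivAt_sqrt hs.ne').comp x (hasDerivAt_base x)

lemma hasDerivAt_W (l m : ℤ) (x : ℝ) (hs : 0 < 1 - x ^ 2) :
    HasDerivAt (W' l m) (Wd l m x) x := by
  have hσne : Real.sqrt (1 - x ^ 2) ≠ 0 := (Real.sqrt_pos.mpr hs).ne'
  have h1 := (hasDerivAt_sigma x hs).mul ((hasDerivAt_U1 l m x hs).const_mul (K0 l m))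
  have h2 := ((hasDerivAt_const x (m:ℝ)).div (hasDerivAt_sigma x hs) hσne).mul
    ((hasDerivAt_U l m x hs).const_mul (K0 l m))
  have := h1.sub h2
  have hσ2 : Real.sqrt (1 - x ^ 2) ^ 2 = 1 - x ^ 2 := Real.sq_sqrt hs.le
  refine this.congr_deriv ?_
  simp only [Wd, Pi.div_apply]
  rw [show (Real.sqrt (1 - x ^ 2)) ^ 3 = (1 - x ^ 2) * Real.sqrt (1 - x ^ 2) by
    rw [pow_succ, hσ2]]
  field_simp
  linear_combination (x * K0 l m * (m:ℝ) * U l m x) * hσ2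

lemma starW (l m : ℤ) (hl : 1 ≤ l) (hm₁ : -l ≤ m) (hm₂ : m ≤ l) (x : ℝ)
    (hs : 0 < 1 - x ^ 2) :
    (1 - x ^ 2) * Wd l m x
      = (x - (m:ℝ)) * W' l m x
        - ((l:ℝ) * ((l:ℝ) + 1)) * Real.sqrt (1 - x ^ 2) * (K0 l m * U l m x) := by
  have hσpos : 0 < Real.sqrt (1 - x ^ 2) := Real.sqrt_pos.mpr hs
  have hσ2 : Real.sqrt (1 - x ^ 2) ^ 2 = 1 - x ^ 2 := Real.sq_sqrt hs.le
  have hU2 : U2 l m x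
      = (2 * x * U1 l m x - ((l:ℝ) * ((l:ℝ) + 1)) * U l m x
          + (m:ℝ) ^ 2 * U l m x / (1 - x ^ 2)) / (1 - x ^ 2) := by
    rw [eq_div_iff hs.ne']
    linear_combination ode l m hl hm₁ hm₂ x hs
  simp only [W', Wd, hU2]
  set σ := Real.sqrt (1 - x ^ 2) with hσdef
  rw [← hσ2]
  field_simp
  ring

end FlmAux

open FlmAux

/-- The functions `F_{lm}` satisfy the Sturm–Liouville differential equation
`d/dx[(1 − x²) F'] − ((m² − 2mx + 1)/(1 − x²)) F = −l(l+1) F`. -/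
theorem Flm_sturm_liouville (l m : ℤ) (hl : 1 ≤ l) (hm₁ : -l ≤ m) (hm₂ : m ≤ l)
    (x : ℝ) (hx : x ∈ Set.Ioo (-1 : ℝ) 1) :
    deriv (fun y => (1 - y ^ 2) * deriv (Flm l m) y) x -
        (((m : ℝ) ^ 2 - 2 * m * x + 1) / (1 - x ^ 2)) * Flm l m x =
      -((l : ℝ) * ((l : ℝ) + 1)) * Flm l m x := by
  obtain ⟨hx1, hx2⟩ := hx
  have hs : 0 < 1 - x ^ 2 := by nlinarith
  -- Ulm as a multiple of the auxiliary U
  have hUfun : Ulm l m = fun y => K0 l m * U l m y := by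
    funext y
    have habs : |m| ≤ l := abs_le.mpr ⟨hm₁, hm₂⟩
    have hzp : ∀ a : ℝ, a ^ l = a ^ l.toNat := fun a => by
      rw [← zpow_natCast, Int.toNat_of_nonneg (by omega)]
    have hwfun : (fun z : ℝ => (z ^ 2 - 1) ^ l) = FlmAux.w l.toNat := by
      funext z
      simp only [FlmAux.w]
      exact hzp _
    rw [Ulm, if_pos habs, Plm, hwfun]
    simp only [K0, clm, U, G, Nat.add_zero]
    ring
  -- derivative of Ulm
  have hUlmDeriv : ∀ y : ℝ, 0 < 1 - y ^ 2 → deriv (Ulm l m) y = K0 l m * U1 l m y := by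
    intro y hsy
    rw [hUfun]
    exact ((hasDerivAt_U l m y hsy).const_mul (K0 l m)).deriv
  -- Flm as a multiple of W'
  have hVW : ∀ y : ℝ, 0 < 1 - y ^ 2 →
      Flm l m y = (1 / Real.sqrt ((l:ℝ) * ((l:ℝ) + 1))) * W' l m y := by
    intro y hsy
    rw [Flm, hUlmDeriv y hsy, hUfun]
    simp only [W']
  have hevx : ∀ᶠ y in nhds x, 0 < 1 - y ^ 2 := by
    have hop : IsOpen {y : ℝ | 0 < 1 - y ^ 2} :=
      isOpen_lt continuous_const (continuous_const.sub (continuous_pow 2))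
    exact hop.mem_nhds hs
  -- derivative of Flm on the open set
  have hFderiv : ∀ y : ℝ, 0 < 1 - y ^ 2 →
      HasDerivAt (Flm l m) ((1 / Real.sqrt ((l:ℝ) * ((l:ℝ) + 1))) * Wd l m y) y := by
    intro y hsy
    have hevy : ∀ᶠ z in nhds y, 0 < 1 - z ^ 2 := by
      have hop : IsOpen {z : ℝ | 0 < 1 - z ^ 2} :=
        isOpen_lt continuous_const (continuous_const.sub (continuous_pow 2))
      exact hop.mem_nhds hsy
    have h2 : HasDerivAt (fun z => (1 / Real.sqrt ((l:ℝ) * ((l:ℝ) + 1))) * W' l m z)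
        ((1 / Real.sqrt ((l:ℝ) * ((l:ℝ) + 1))) * Wd l m y) y :=
      (hasDerivAt_W l m y hsy).const_mul _
    exact h2.congr_of_eventuallyEq (hevy.mono fun z hz => hVW z hz)
  -- rewrite the function being differentiated in the goal
  have hmain : (fun y => (1 - y ^ 2) * deriv (Flm l m) y) =ᶠ[nhds x]
      (fun y => (1 / Real.sqrt ((l:ℝ) * ((l:ℝ) + 1))) *
        ((y - (m:ℝ)) * W' l m y
          - ((l:ℝ) * ((l:ℝ) + 1)) * Real.sqrt (1 - y ^ 2) * (K0 l m * U l m y))) := by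
    filter_upwards [hevx] with y hy
    rw [(hFderiv y hy).deriv]
    linear_combination (1 / Real.sqrt ((l:ℝ) * ((l:ℝ) + 1))) * starW l m hl hm₁ hm₂ y hy
  have hΦ : HasDerivAt
      (fun y : ℝ => (1 / Real.sqrt ((l:ℝ) * ((l:ℝ) + 1))) *
        ((y - (m:ℝ)) * W' l m y
          - ((l:ℝ) * ((l:ℝ) + 1)) * Real.sqrt (1 - y ^ 2) * (K0 l m * U l m y)))
      ((1 / Real.sqrt ((l:ℝ) * ((l:ℝ) + 1))) *
        ((1 * W' l m x + (x - (m:ℝ)) * Wd l m x)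
          - ((((l:ℝ) * ((l:ℝ) + 1)) * (1 / (2 * Real.sqrt (1 - x ^ 2)) * (-(2 * x))))
              * (K0 l m * U l m x)
            + (((l:ℝ) * ((l:ℝ) + 1)) * Real.sqrt (1 - x ^ 2)) * (K0 l m * U1 l m x)))) x := by
    have h1 : HasDerivAt (fun y : ℝ => y - (m:ℝ)) 1 x := (hasDerivAt_id x).sub_const _
    exact (((h1.mul (hasDerivAt_W l m x hs)).sub
      (((hasDerivAt_sigma x hs).const_mul ((l:ℝ) * ((l:ℝ) + 1))).mul
        ((hasDerivAt_U l m x hs).const_mul (K0 l m)))).const_mul _)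
  rw [hmain.deriv_eq, hΦ.deriv, hVW x hs]
  -- final algebra
  have hσpos : 0 < Real.sqrt (1 - x ^ 2) := Real.sqrt_pos.mpr hs
  have hσ2 : Real.sqrt (1 - x ^ 2) ^ 2 = 1 - x ^ 2 := Real.sq_sqrt hs.le
  have hWd : Wd l m x = ((x - (m:ℝ)) * W' l m x
      - ((l:ℝ) * ((l:ℝ) + 1)) * Real.sqrt (1 - x ^ 2) * (K0 l m * U l m x)) / (1 - x ^ 2) := by
    rw [eq_div_iff hs.ne']
    linear_combination starW l m hl hm₁ hm₂ x hs
  have hP1 : K0 l m * U1 l m x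
      = (W' l m x + ((m:ℝ) / Real.sqrt (1 - x ^ 2)) * (K0 l m * U l m x))
          / Real.sqrt (1 - x ^ 2) := by
    rw [eq_div_iff hσpos.ne']
    simp only [W']
    ring
  have key : (1 * W' l m x + (x - (m:ℝ)) * Wd l m x)
        - ((((l:ℝ) * ((l:ℝ) + 1)) * (1 / (2 * Real.sqrt (1 - x ^ 2)) * (-(2 * x))))
            * (K0 l m * U l m x)
          + (((l:ℝ) * ((l:ℝ) + 1)) * Real.sqrt (1 - x ^ 2)) * (K0 l m * U1 l m x))
        - (((m:ℝ) ^ 2 - 2 * (m:ℝ) * x + 1) / (1 - x ^ 2)) * W' l m x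
      = -((l:ℝ) * ((l:ℝ) + 1)) * W' l m x := by
    rw [hWd, hP1]
    set σ := Real.sqrt (1 - x ^ 2) with hσdef
    rw [show (1:ℝ) - x ^ 2 = σ ^ 2 from hσ2.symm]
    have hσne : σ ≠ 0 := hσpos.ne'
    field_simp
    linear_combination W' l m x * hσ2
  linear_combination (1 / Real.sqrt ((l:ℝ) * ((l:ℝ) + 1))) * key
end

section
/- Endpoint values of F_{lm}: for all integers l ≥ 1 and −l ≤ m ≤ l, the limit of F_{lm}(x) as x → 1⁻ equals c_{l,0} = √((2l+1)/2) if m = 1 and equals 0 otherwise, and the limit of F_{lm}(x) as x → −1⁺ equals (−1)^{l−1} c_{l,0} if m = −1 and equals 0 otherwise. -/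
open MeasureTheory

open Polynomial

private lemma iteratedDeriv_polyeval (p : Polynomial ℝ) (k : ℕ) (x : ℝ) :
    iteratedDeriv k (fun y => p.eval y) x = (derivative^[k] p).eval x := by
  induction k generalizing p x with
  | zero => simp
  | succ k ih =>
    rw [iteratedDeriv_succ', Function.iterate_succ_apply]
    have : deriv (fun y : ℝ => p.eval y) = fun y => (derivative p).eval y := by
      funext y; exact Polynomial.deriv (p := p)
    rw [this, ih]

private lemma factor_iterate (a : ℝ) (q : Polynomial ℝ) (n k : ℕ) (hk : k ≤ n) :
    ∃ r : Polynomial ℝ, derivative^[k] ((X - C a) ^ n * q) = (X - C a) ^ (n - k) * r := by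
  induction k with
  | zero => exact ⟨q, by simp⟩
  | succ k ih =>
    obtain ⟨r, hr⟩ := ih (by omega)
    refine ⟨C ((n - k : ℕ) : ℝ) * r + (X - C a) * derivative r, ?_⟩
    rw [Function.iterate_succ_apply', hr, derivative_mul, derivative_pow, derivative_X_sub_C]
    have h1 : n - k = (n - (k + 1)) + 1 := by omega
    rw [h1]
    simp only [Nat.add_sub_cancel]
    ring

private lemma eval_top (n : ℕ) (hn : 1 ≤ n) :
    (derivative^[n + 1] ((X - C 1) ^ n * (X - C (-1)) ^ n : Polynomial ℝ)).eval 1 =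
      ((n : ℝ) + 1) * n.factorial * ((n : ℝ) * 2 ^ (n - 1)) := by
  rw [Polynomial.iterate_derivative_mul, Polynomial.eval_finset_sum]
  rw [Finset.sum_eq_single 1]
  · have h1 : n + 1 - 1 = n := by omega
    rw [h1, Polynomial.iterate_derivative_X_sub_pow_self]
    simp only [Function.iterate_one, derivative_pow, derivative_X_sub_C, Nat.choose_one_right]
    simp only [Polynomial.eval_smul, Polynomial.eval_mul, Polynomial.eval_pow,
      Polynomial.eval_sub, Polynomial.eval_X, Polynomial.eval_C, Polynomial.eval_natCast,
      smul_eq_mul, Polynomial.eval_one, mul_one]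
    push_cast
    ring_nf
  · intro i hi hne
    rcases Nat.eq_zero_or_pos i with rfl | hipos
    · rw [Polynomial.iterate_derivative_X_sub_pow]
      have : n.descFactorial (n + 1 - 0) = 0 := by
        apply Nat.descFactorial_eq_zero_iff_lt.mpr; omega
      simp [this]
    · -- 2 ≤ i, i ≤ n + 1
      have hi2 : 2 ≤ i := by omega
      have hile : i ≤ n + 1 := by
        have := Finset.mem_range.mp hi; omega
      rw [Polynomial.iterate_derivative_X_sub_pow]
      have hexp : n - (n + 1 - i) = i - 1 := by omega
      rw [hexp]
      simp only [Polynomial.eval_smul, Polynomial.eval_mul, Polynomial.eval_pow,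
        Polynomial.eval_sub, Polynomial.eval_X, Polynomial.eval_C, smul_eq_mul]
      rw [show (1 : ℝ) - 1 = 0 by norm_num, zero_pow (by omega : i - 1 ≠ 0)]
      ring
  · intro h
    exact absurd (Finset.mem_range.mpr (by omega)) h

private lemma eval_bot (n : ℕ) :
    (derivative^[n] ((X - C 1) ^ n * (X - C (-1)) ^ n : Polynomial ℝ)).eval (-1) =
      (n.factorial : ℝ) * (-2) ^ n := by
  rw [Polynomial.iterate_derivative_mul, Polynomial.eval_finset_sum]
  rw [Finset.sum_eq_single n]
  · simp only [Nat.sub_self, Function.iterate_zero, id_eq, Nat.choose_self,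
      Polynomial.iterate_derivative_X_sub_pow_self]
    simp only [Polynomial.eval_smul, Polynomial.eval_mul, Polynomial.eval_pow,
      Polynomial.eval_sub, Polynomial.eval_X, Polynomial.eval_C, Polynomial.eval_natCast,
      smul_eq_mul, one_mul]
    rw [show (-1 : ℝ) - 1 = -2 by norm_num]
    ring
  · intro i hi hne
    have hile : i ≤ n := by
      have := Finset.mem_range.mp hi; omega
    rw [Polynomial.iterate_derivative_X_sub_pow (c := (-1 : ℝ))]
    simp only [Polynomial.eval_smul, Polynomial.eval_mul, Polynomial.eval_pow,
      Polynomial.eval_sub, Polynomial.eval_X, Polynomial.eval_C, smul_eq_mul]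
    rw [show (-1 : ℝ) - (-1) = 0 by norm_num, zero_pow (by omega : n - i ≠ 0)]
    ring
  · intro h
    exact absurd (Finset.mem_range.mpr (by omega)) h

open Polynomial in
private lemma flm_eq (l m : ℤ) (hl : 1 ≤ l) (hm₁ : -l ≤ m) (hm₂ : m ≤ l) (x : ℝ)
    (hx : x ∈ Set.Ioo (-1 : ℝ) 1) :
    Flm l m x =
      clm l m * ((-1 : ℝ) ^ m / ((2 : ℝ) ^ l * (l.toNat.factorial : ℝ))) /
          Real.sqrt ((l : ℝ) * ((l : ℝ) + 1)) *
        ((1 - x ^ 2) ^ (((m : ℝ) - 1) / 2) *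
        ((1 - x ^ 2) *
            (derivative^[(l + m).toNat + 1]
              ((X - C 1) ^ l.toNat * (X - C (-1)) ^ l.toNat : Polynomial ℝ)).eval x
          - (m : ℝ) * (1 + x) *
            (derivative^[(l + m).toNat]
              ((X - C 1) ^ l.toNat * (X - C (-1)) ^ l.toNat : Polynomial ℝ)).eval x)) := by
  have hln : (l.toNat : ℤ) = l := Int.toNat_of_nonneg (by omega)
  set n := l.toNat with hn
  set k := (l + m).toNat with hk
  set P : Polynomial ℝ := (X - C 1) ^ n * (X - C (-1)) ^ n with hP
  have hs : (0 : ℝ) < 1 - x ^ 2 := by nlinarith [hx.1, hx.2]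
  have hfun : (fun y : ℝ => (y ^ 2 - 1) ^ l) = fun y : ℝ => P.eval y := by
    funext y
    rw [show l = (n : ℤ) from hln.symm, zpow_natCast]
    simp only [hP, Polynomial.eval_mul, Polynomial.eval_pow, Polynomial.eval_sub,
      Polynomial.eval_X, Polynomial.eval_C]
    rw [← mul_pow]; ring_nf
  -- rewrite Ulm
  have hUeq : Ulm l m = fun y : ℝ =>
      (clm l m * ((-1 : ℝ) ^ m / ((2 : ℝ) ^ l * (n.factorial : ℝ)))) *
        ((1 - y ^ 2) ^ ((m : ℝ) / 2) * (derivative^[k] P).eval y) := by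
    funext y
    rw [Ulm, if_pos (abs_le.mpr ⟨hm₁, hm₂⟩), Plm, hfun, iteratedDeriv_polyeval]
    ring
  set A := clm l m * ((-1 : ℝ) ^ m / ((2 : ℝ) ^ l * (n.factorial : ℝ))) with hA
  -- derivative of Ulm at x
  have hbase : HasDerivAt (fun y : ℝ => 1 - y ^ 2) (-(2 * x)) x := by
    simpa using ((hasDerivAt_pow 2 x).const_sub 1)
  have hu : HasDerivAt (fun y : ℝ => (1 - y ^ 2) ^ ((m : ℝ) / 2))
      (-(2 * x) * ((m : ℝ) / 2) * (1 - x ^ 2) ^ ((m : ℝ) / 2 - 1)) x :=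
    hbase.rpow_const (Or.inl hs.ne')
  have hg : HasDerivAt (fun y : ℝ => (derivative^[k] P).eval y)
      ((derivative^[k + 1] P).eval x) x := by
    rw [Function.iterate_succ_apply']
    exact (derivative^[k] P).hasDerivAt x
  have hU : HasDerivAt (Ulm l m)
      (A * ((-(2 * x) * ((m : ℝ) / 2) * (1 - x ^ 2) ^ ((m : ℝ) / 2 - 1)) *
          (derivative^[k] P).eval x +
        (1 - x ^ 2) ^ ((m : ℝ) / 2) * (derivative^[k + 1] P).eval x)) x := by
    rw [hUeq]
    exact (hu.mul hg).const_mul A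
  rw [Flm, hU.deriv, hUeq]
  beta_reduce
  -- now pure rpow algebra
  set s := 1 - x ^ 2 with hsdef
  set t := Real.sqrt s with htdef
  have ht2 : t ^ 2 = s := Real.sq_sqrt hs.le
  have htpos : 0 < t := Real.sqrt_pos.mpr hs
  set w := s ^ (((m : ℝ) - 1) / 2) with hwdef
  have hu1 : s ^ ((m : ℝ) / 2) = w * t := by
    rw [hwdef, htdef, Real.sqrt_eq_rpow, ← Real.rpow_add hs]
    congr 1; ring
  have hu2 : s ^ ((m : ℝ) / 2 - 1) = w / t := by
    rw [hwdef, htdef, Real.sqrt_eq_rpow, ← Real.rpow_sub hs]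
    congr 1; ring
  rw [hu1, hu2, ← ht2]
  field_simp
  ring

private lemma tendsto_top {f F : ℝ → ℝ} (hF : ContinuousAt F 1)
    (hEq : ∀ x ∈ Set.Ioo (-1 : ℝ) 1, f x = F x) :
    Filter.Tendsto f (nhdsWithin 1 (Set.Iio 1)) (nhds (F 1)) := by
  have hmem : Set.Ioo (-1 : ℝ) 1 ∈ nhdsWithin (1 : ℝ) (Set.Iio 1) :=
    Ioo_mem_nhdsLT_of_mem (by constructor <;> norm_num)
  have hev : f =ᶠ[nhdsWithin 1 (Set.Iio 1)] F :=
    Filter.eventuallyEq_of_mem hmem hEq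
  exact (hF.tendsto.mono_left nhdsWithin_le_nhds).congr' hev.symm

private lemma tendsto_bot {f F : ℝ → ℝ} (hF : ContinuousAt F (-1))
    (hEq : ∀ x ∈ Set.Ioo (-1 : ℝ) 1, f x = F x) :
    Filter.Tendsto f (nhdsWithin (-1) (Set.Ioi (-1))) (nhds (F (-1))) := by
  have hmem : Set.Ioo (-1 : ℝ) 1 ∈ nhdsWithin (-1 : ℝ) (Set.Ioi (-1)) :=
    Ioo_mem_nhdsGT_of_mem (by constructor <;> norm_num)
  have hev : f =ᶠ[nhdsWithin (-1) (Set.Ioi (-1))] F :=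
    Filter.eventuallyEq_of_mem hmem hEq
  exact (hF.tendsto.mono_left nhdsWithin_le_nhds).congr' hev.symm

set_option maxHeartbeats 2000000 in
open Polynomial in
/-- Endpoint values of `F_{lm}`: as `x → 1⁻` the limit is `c_{l,0} = √((2l+1)/2)`
when `m = 1` and `0` otherwise, and as `x → −1⁺` the limit is `(−1)^{l−1} c_{l,0}`
when `m = −1` and `0` otherwise. -/
theorem Flm_endpoint_values (l m : ℤ) (hl : 1 ≤ l) (hm₁ : -l ≤ m) (hm₂ : m ≤ l) :
    clm l 0 = Real.sqrt ((2 * (l : ℝ) + 1) / 2) ∧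
    Filter.Tendsto (Flm l m) (nhdsWithin 1 (Set.Iio 1))
      (nhds (if m = 1 then Real.sqrt ((2 * (l : ℝ) + 1) / 2) else 0)) ∧
    Filter.Tendsto (Flm l m) (nhdsWithin (-1) (Set.Ioi (-1)))
      (nhds (if m = -1 then (-1 : ℝ) ^ (l - 1) * Real.sqrt ((2 * (l : ℝ) + 1) / 2)
        else 0)) := by
  have hln : (l.toNat : ℤ) = l := Int.toNat_of_nonneg (by omega)
  have hkk : ((l + m).toNat : ℤ) = l + m := Int.toNat_of_nonneg (by omega)
  have hlr : (l : ℝ) = (l.toNat : ℝ) := by exact_mod_cast hln.symm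
  have hl1 : (1 : ℝ) ≤ (l : ℝ) := by exact_mod_cast hl
  have hq0 : (0 : ℝ) ≤ (2 * (l : ℝ) + 1) / 2 := by linarith
  have hd0 : (0 : ℝ) < (l : ℝ) * ((l : ℝ) + 1) := by nlinarith
  have key := fun (x : ℝ) (hx : x ∈ Set.Ioo (-1 : ℝ) 1) => flm_eq l m hl hm₁ hm₂ x hx
  set K : ℝ := clm l m * ((-1 : ℝ) ^ m / ((2 : ℝ) ^ l * (l.toNat.factorial : ℝ))) /
      Real.sqrt ((l : ℝ) * ((l : ℝ) + 1)) with hK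
  set g : ℝ → ℝ := fun x => (derivative^[(l + m).toNat]
      ((X - C 1) ^ l.toNat * (X - C (-1)) ^ l.toNat : Polynomial ℝ)).eval x with hgdef
  set g' : ℝ → ℝ := fun x => (derivative^[(l + m).toNat + 1]
      ((X - C 1) ^ l.toNat * (X - C (-1)) ^ l.toNat : Polynomial ℝ)).eval x with hg'def
  have hgc : Continuous g := by rw [hgdef]; exact Polynomial.continuous _
  have hg'c : Continuous g' := by rw [hg'def]; exact Polynomial.continuous _
  have key' : ∀ x ∈ Set.Ioo (-1 : ℝ) 1, Flm l m x =
      K * ((1 - x ^ 2) ^ (((m : ℝ) - 1) / 2) *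
        ((1 - x ^ 2) * g' x - (m : ℝ) * (1 + x) * g x)) := fun x hx => key x hx
  clear key
  have hclm0 : clm l 0 = Real.sqrt ((2 * (l : ℝ) + 1) / 2) := by
    rw [clm, sub_zero, add_zero, mul_div_assoc,
      div_self (Nat.cast_ne_zero.mpr (Nat.factorial_ne_zero _)), mul_one]
  -- continuity of the "B" bracket
  have hBc : Continuous fun x : ℝ => (1 - x ^ 2) * g' x - (m : ℝ) * (1 + x) * g x :=
    (((continuous_const.sub (continuous_pow 2)).mul hg'c).sub
      (((continuous_const.mul (continuous_const.add continuous_id))).mul hgc))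
  -- m = 0 reduction (used at both endpoints)
  have hm0Eq : m = 0 → ∀ x ∈ Set.Ioo (-1 : ℝ) 1, Flm l m x =
      K * ((1 - x ^ 2) ^ ((1 : ℝ) / 2) * g' x) := by
    intro h0 x hx
    obtain ⟨hx1, hx2⟩ := hx
    have hs : (0 : ℝ) < 1 - x ^ 2 := by nlinarith
    rw [key' x ⟨hx1, hx2⟩, h0]
    have hpow : (1 - x ^ 2) ^ ((((0 : ℤ) : ℝ) - 1) / 2) * (1 - x ^ 2) =
        (1 - x ^ 2) ^ ((1 : ℝ) / 2) := by
      nth_rewrite 2 [← Real.rpow_one (1 - x ^ 2)]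
      rw [← Real.rpow_add hs]; norm_num
    calc K * ((1 - x ^ 2) ^ ((((0 : ℤ) : ℝ) - 1) / 2) *
            ((1 - x ^ 2) * g' x - ((0 : ℤ) : ℝ) * (1 + x) * g x))
        = K * (((1 - x ^ 2) ^ ((((0 : ℤ) : ℝ) - 1) / 2) * (1 - x ^ 2)) * g' x) := by
          push_cast; ring
      _ = K * ((1 - x ^ 2) ^ ((1 : ℝ) / 2) * g' x) := by rw [hpow]
  have hm0C : ∀ a : ℝ, ContinuousAt (fun x : ℝ => K * ((1 - x ^ 2) ^ ((1 : ℝ) / 2) * g' x)) a :=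
    fun a => continuousAt_const.mul
      ((ContinuousAt.rpow_const (continuous_const.sub (continuous_pow 2)).continuousAt
        (Or.inr (by norm_num))).mul hg'c.continuousAt)
  refine ⟨hclm0, ?_, ?_⟩
  · -- limit at 1⁻
    rcases lt_trichotomy m 1 with hmlt | hmeq | hmgt
    · rcases eq_or_lt_of_le (show m ≤ 0 by omega) with hm0 | hmneg
      · -- m = 0
        rw [if_neg (by omega)]
        have ht := tendsto_top (hm0C 1) (hm0Eq hm0)
        have hval : K * ((1 - (1 : ℝ) ^ 2) ^ ((1 : ℝ) / 2) * g' 1) = 0 := by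
          rw [show (1 : ℝ) - 1 ^ 2 = 0 by norm_num, Real.zero_rpow (by norm_num)]
          ring
        rwa [hval] at ht
      · -- m ≤ -1
        rw [if_neg (by omega)]
        have hkn : (l + m).toNat ≤ l.toNat := by omega
        obtain ⟨r, hr⟩ := factor_iterate 1 ((X - C (-1)) ^ l.toNat) l.toNat (l + m).toNat hkn
        obtain ⟨j, hj⟩ : ∃ j, l.toNat - (l + m).toNat = j + 1 :=
          ⟨l.toNat - (l + m).toNat - 1, by omega⟩
        have hjm : ((j : ℝ) + 1) = -(m : ℝ) := by
          have h : (j : ℤ) + 1 = -m := by omega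
          exact_mod_cast h
        have hmr : (m : ℝ) = -((j : ℝ) + 1) := by linarith
        have hgr : ∀ x : ℝ, g x = (x - 1) ^ (j + 1) * r.eval x := by
          intro x
          rw [hgdef]
          show (derivative^[(l + m).toNat]
            ((X - C 1) ^ l.toNat * (X - C (-1)) ^ l.toNat : Polynomial ℝ)).eval x = _
          rw [hr, hj]
          simp [Polynomial.eval_mul, Polynomial.eval_pow]
        have hg'r : ∀ x : ℝ, g' x =
            ((j : ℝ) + 1) * (x - 1) ^ j * r.eval x +
              (x - 1) ^ (j + 1) * (derivative r).eval x := by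
          intro x
          rw [hg'def]
          show (derivative^[(l + m).toNat + 1]
            ((X - C 1) ^ l.toNat * (X - C (-1)) ^ l.toNat : Polynomial ℝ)).eval x = _
          rw [Function.iterate_succ_apply', hr, hj, Polynomial.derivative_mul,
            Polynomial.derivative_pow, Polynomial.derivative_X_sub_C]
          simp only [Nat.add_sub_cancel, Polynomial.eval_add, Polynomial.eval_mul,
            Polynomial.eval_pow, Polynomial.eval_sub, Polynomial.eval_X, Polynomial.eval_C,
            Polynomial.eval_natCast, mul_one]
          push_cast
          ring
        have hmle : (m : ℝ) ≤ -1 := by exact_mod_cast (show m ≤ -1 by omega)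
        have hE : (0 : ℝ) < (1 - (m : ℝ)) / 2 := by linarith
        have hEq : ∀ x ∈ Set.Ioo (-1 : ℝ) 1, Flm l m x =
            (K * (-1) ^ (j + 1)) * ((1 - x) ^ ((1 - (m : ℝ)) / 2) *
              ((1 + x) ^ (((m : ℝ) + 1) / 2) * (derivative r).eval x)) := by
          intro x hx
          obtain ⟨hx1, hx2⟩ := hx
          have h1x : (0 : ℝ) < 1 - x := by linarith
          have h2x : (0 : ℝ) < 1 + x := by linarith
          have hs : (0 : ℝ) < 1 - x ^ 2 := by nlinarith
          rw [key' x ⟨hx1, hx2⟩, hgr, hg'r]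
          have hB : (1 - x ^ 2) * (((j : ℝ) + 1) * (x - 1) ^ j * r.eval x
                + (x - 1) ^ (j + 1) * (derivative r).eval x)
              - (m : ℝ) * (1 + x) * ((x - 1) ^ (j + 1) * r.eval x)
              = (x - 1) ^ (j + 1) * ((1 - x ^ 2) * (derivative r).eval x) := by
            rw [hmr, pow_succ]
            ring
          rw [hB]
          have hss : (1 - x ^ 2) ^ (((m : ℝ) + 1) / 2)
              = (1 - x ^ 2) ^ (((m : ℝ) - 1) / 2) * (1 - x ^ 2) := by
            rw [show ((m : ℝ) + 1) / 2 = ((m : ℝ) - 1) / 2 + 1 by ring,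
              Real.rpow_add hs, Real.rpow_one]
          have hsplit : (x - 1) ^ (j + 1) * (1 - x ^ 2) ^ (((m : ℝ) + 1) / 2)
              = (-1 : ℝ) ^ (j + 1) * ((1 - x) ^ ((1 - (m : ℝ)) / 2) *
                (1 + x) ^ (((m : ℝ) + 1) / 2)) := by
            rw [show (x - 1 : ℝ) = -(1 - x) by ring, neg_pow,
              show (1 - x ^ 2 : ℝ) = (1 - x) * (1 + x) by ring,
              Real.mul_rpow h1x.le h2x.le,
              ← Real.rpow_natCast (1 - x) (j + 1)]
            have hcomb : (1 - x) ^ (((j + 1 : ℕ)) : ℝ) * (1 - x) ^ (((m : ℝ) + 1) / 2)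
                = (1 - x) ^ ((1 - (m : ℝ)) / 2) := by
              rw [← Real.rpow_add h1x]
              congr 1
              push_cast
              linarith
            linear_combination ((-1 : ℝ) ^ (j + 1) * (1 + x) ^ (((m : ℝ) + 1) / 2)) * hcomb
          linear_combination (K * (derivative r).eval x) * hsplit -
            (K * (derivative r).eval x * (x - 1) ^ (j + 1)) * hss
        have hcont : ContinuousAt (fun x : ℝ => (K * (-1) ^ (j + 1)) *
            ((1 - x) ^ ((1 - (m : ℝ)) / 2) *
              ((1 + x) ^ (((m : ℝ) + 1) / 2) * (derivative r).eval x))) 1 :=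
          continuousAt_const.mul ((ContinuousAt.rpow_const
            (continuous_const.sub continuous_id).continuousAt (Or.inr hE.le)).mul
            ((ContinuousAt.rpow_const (continuous_const.add continuous_id).continuousAt
              (Or.inl (by norm_num))).mul ((derivative r).continuous.continuousAt)))
        have ht := tendsto_top hcont hEq
        have hval : (K * (-1) ^ (j + 1)) * ((1 - (1 : ℝ)) ^ ((1 - (m : ℝ)) / 2) *
            ((1 + (1 : ℝ)) ^ (((m : ℝ) + 1) / 2) * (derivative r).eval 1)) = 0 := by
          rw [sub_self, Real.zero_rpow hE.ne']
          ring
        rwa [hval] at ht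
    · -- m = 1
      subst hmeq
      rw [if_pos rfl]
      have hkN : (l + 1).toNat = l.toNat - 1 + 1 + 1 - 1 + 1 := by omega
      have hg1 : g 1 = ((l.toNat : ℝ) + 1) * (l.toNat.factorial : ℝ) *
          ((l.toNat : ℝ) * 2 ^ (l.toNat - 1)) := by
        rw [hgdef]
        show (derivative^[(l + 1).toNat]
          ((X - C 1) ^ l.toNat * (X - C (-1)) ^ l.toNat : Polynomial ℝ)).eval 1 = _
        rw [show (l + 1).toNat = l.toNat + 1 by omega]
        exact eval_top l.toNat (by omega)
      have hEq : ∀ x ∈ Set.Ioo (-1 : ℝ) 1, Flm l 1 x =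
          K * ((1 - x ^ 2) * g' x - (1 + x) * g x) := by
        intro x hx
        rw [key' x hx]
        rw [show ((((1 : ℤ) : ℝ)) - 1) / 2 = 0 by norm_num, Real.rpow_zero]
        push_cast
        ring
      have hcont : ContinuousAt (fun x : ℝ =>
          K * ((1 - x ^ 2) * g' x - (1 + x) * g x)) 1 :=
        continuousAt_const.mul (((continuous_const.sub (continuous_pow 2)).mul hg'c).sub
          ((continuous_const.add continuous_id).mul hgc)).continuousAt
      have ht := tendsto_top hcont hEq
      have hval : K * ((1 - (1 : ℝ) ^ 2) * g' 1 - (1 + 1) * g 1) =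
          Real.sqrt ((2 * (l : ℝ) + 1) / 2) := by
        have hN : l.toNat = (l.toNat - 1) + 1 := by omega
        set N : ℕ := l.toNat - 1 with hNdef
        have hclm1 : clm l 1 = Real.sqrt (((2 * (l : ℝ) + 1) / 2) / ((l : ℝ) * ((l : ℝ) + 1))) := by
          rw [clm]
          congr 1
          rw [show (l - 1).toNat = N by omega, show (l + 1).toNat = N + 2 by omega]
          have hfac : ((N + 2).factorial : ℝ) = ((N : ℝ) + 2) * ((N : ℝ) + 1) * (N.factorial : ℝ) := by
            rw [Nat.factorial_succ, Nat.factorial_succ]; push_cast; ring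
          have hlN : (l : ℝ) = (N : ℝ) + 1 := by
            rw [hlr]; rw [show l.toNat = N + 1 from hN]; push_cast; ring
          rw [hfac, hlN]
          have hNf : (N.factorial : ℝ) ≠ 0 := Nat.cast_ne_zero.mpr (Nat.factorial_ne_zero _)
          field_simp
          ring
        have h2l : (2 : ℝ) ^ l = 2 ^ l.toNat := by
          conv_lhs => rw [← hln]
          rw [zpow_natCast]
        have hD0 : Real.sqrt ((l : ℝ) * ((l : ℝ) + 1)) ≠ 0 := (Real.sqrt_pos.mpr hd0).ne'
        have hDD : Real.sqrt ((l : ℝ) * ((l : ℝ) + 1)) * Real.sqrt ((l : ℝ) * ((l : ℝ) + 1)) =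
            (l : ℝ) * ((l : ℝ) + 1) := Real.mul_self_sqrt hd0.le
        have hnum : ((-1 : ℝ) / ((2 : ℝ) ^ l.toNat * (l.toNat.factorial : ℝ))) *
            ((1 - (1 : ℝ) ^ 2) * g' 1 - (1 + 1) * (((l.toNat : ℝ) + 1) * (l.toNat.factorial : ℝ) *
              ((l.toNat : ℝ) * 2 ^ (l.toNat - 1)))) = (l : ℝ) * ((l : ℝ) + 1) := by
          have h2 : (2 : ℝ) ^ l.toNat = 2 * 2 ^ (l.toNat - 1) := by
            rw [hN]; rw [show N + 1 - 1 = N from rfl, pow_succ]; ring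
          have hfne : (l.toNat.factorial : ℝ) ≠ 0 := Nat.cast_ne_zero.mpr (Nat.factorial_ne_zero _)
          have h2ne : (2 : ℝ) ^ (l.toNat - 1) ≠ 0 := by positivity
          rw [hlr, h2]
          field_simp
          ring
        rw [hg1, hK, hclm1, h2l, zpow_one, Real.sqrt_div hq0]
        field_simp
        rw [show (l : ℝ) = (N : ℝ) + 1 from by rw [hlr, hN]; push_cast; ring, hN]
        push_cast
        have haa : Real.sqrt ((N : ℝ) + 1) * Real.sqrt ((N : ℝ) + 1) = (N : ℝ) + 1 :=
          Real.mul_self_sqrt (by positivity)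
        have hbb : Real.sqrt ((N : ℝ) + 1 + 1) * Real.sqrt ((N : ℝ) + 1 + 1) = (N : ℝ) + 1 + 1 :=
          Real.mul_self_sqrt (by positivity)
        have hcc : Real.sqrt (((N : ℝ) + 1) * ((N : ℝ) + 1 + 1)) *
            Real.sqrt (((N : ℝ) + 1) * ((N : ℝ) + 1 + 1)) = ((N : ℝ) + 1) * ((N : ℝ) + 1 + 1) :=
          Real.mul_self_sqrt (by positivity)
        linear_combination (-(Real.sqrt (2 * ((N : ℝ) + 1) + 1) * Real.sqrt 2 *
            2 ^ (N + 1) * (((N + 1).factorial : ℝ))) *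
            (Real.sqrt ((N : ℝ) + 1 + 1) * Real.sqrt ((N : ℝ) + 1 + 1))) * haa -
          (Real.sqrt (2 * ((N : ℝ) + 1) + 1) * Real.sqrt 2 * 2 ^ (N + 1) *
            (((N + 1).factorial : ℝ)) * ((N : ℝ) + 1)) * hbb +
          2 * (Real.sqrt (2 * ((N : ℝ) + 1) + 1) * Real.sqrt 2) * ((N + 1).factorial : ℝ) * 2 ^ N *
            (Real.sqrt ((N : ℝ) + 1) * Real.sqrt ((N : ℝ) + 1)) * hbb +
          2 * (Real.sqrt (2 * ((N : ℝ) + 1) + 1) * Real.sqrt 2) * ((N + 1).factorial : ℝ) * 2 ^ N *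
            ((N : ℝ) + 2) * haa -
          2 * ((N + 1).factorial : ℝ) * 2 ^ N * hcc
      rwa [hval] at ht
    · -- m ≥ 2
      rw [if_neg (by omega)]
      have hm2 : (2 : ℝ) ≤ (m : ℝ) := by exact_mod_cast hmgt
      have he : (0 : ℝ) < ((m : ℝ) - 1) / 2 := by linarith
      have hcont : ContinuousAt (fun x : ℝ => K * ((1 - x ^ 2) ^ (((m : ℝ) - 1) / 2) *
          ((1 - x ^ 2) * g' x - (m : ℝ) * (1 + x) * g x))) 1 :=
        continuousAt_const.mul ((ContinuousAt.rpow_const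
          (continuous_const.sub (continuous_pow 2)).continuousAt (Or.inr he.le)).mul
          hBc.continuousAt)
      have ht := tendsto_top hcont key'
      have hval : K * ((1 - (1 : ℝ) ^ 2) ^ (((m : ℝ) - 1) / 2) *
          ((1 - (1 : ℝ) ^ 2) * g' 1 - (m : ℝ) * (1 + 1) * g 1)) = 0 := by
        rw [show (1 : ℝ) - 1 ^ 2 = 0 by norm_num, Real.zero_rpow he.ne']
        ring
      rwa [hval] at ht
  · -- limit at -1⁺
    rcases lt_trichotomy m (-1) with hmlt | hmeq | hmgt
    · -- m ≤ -2
      rw [if_neg (by omega)]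
      have hPc : ((X - C 1) ^ l.toNat * (X - C (-1)) ^ l.toNat : Polynomial ℝ)
          = (X - C (-1)) ^ l.toNat * (X - C 1) ^ l.toNat := mul_comm _ _
      have hkn : (l + m).toNat ≤ l.toNat := by omega
      obtain ⟨r, hr⟩ := factor_iterate (-1) ((X - C 1) ^ l.toNat) l.toNat (l + m).toNat hkn
      obtain ⟨j, hj⟩ : ∃ j, l.toNat - (l + m).toNat = j + 1 :=
        ⟨l.toNat - (l + m).toNat - 1, by omega⟩
      have hjm : ((j : ℝ) + 1) = -(m : ℝ) := by
        have h : (j : ℤ) + 1 = -m := by omega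
        exact_mod_cast h
      have hmr : (m : ℝ) = -((j : ℝ) + 1) := by linarith
      have hgr : ∀ x : ℝ, g x = (x + 1) ^ (j + 1) * r.eval x := by
        intro x
        rw [hgdef]
        show (derivative^[(l + m).toNat]
          ((X - C 1) ^ l.toNat * (X - C (-1)) ^ l.toNat : Polynomial ℝ)).eval x = _
        rw [hPc, hr, hj]
        simp [Polynomial.eval_mul, Polynomial.eval_pow, sub_neg_eq_add]
      have hg'r : ∀ x : ℝ, g' x =
          ((j : ℝ) + 1) * (x + 1) ^ j * r.eval x +
            (x + 1) ^ (j + 1) * (derivative r).eval x := by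
        intro x
        rw [hg'def]
        show (derivative^[(l + m).toNat + 1]
          ((X - C 1) ^ l.toNat * (X - C (-1)) ^ l.toNat : Polynomial ℝ)).eval x = _
        rw [Function.iterate_succ_apply', hPc, hr, hj, Polynomial.derivative_mul,
          Polynomial.derivative_pow, Polynomial.derivative_X_sub_C]
        simp only [Nat.add_sub_cancel, Polynomial.eval_add, Polynomial.eval_mul,
          Polynomial.eval_pow, Polynomial.eval_sub, Polynomial.eval_X, Polynomial.eval_C,
          Polynomial.eval_natCast, mul_one, sub_neg_eq_add]
        push_cast
        ring
      have hmle : (m : ℝ) ≤ -2 := by exact_mod_cast (show m ≤ -2 by omega)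
      have hE : (0 : ℝ) < (-(m : ℝ) - 1) / 2 := by linarith
      have hEq : ∀ x ∈ Set.Ioo (-1 : ℝ) 1, Flm l m x =
          K * ((1 + x) ^ ((-(m : ℝ) - 1) / 2) * ((1 - x) ^ (((m : ℝ) - 1) / 2) *
            (2 * ((j : ℝ) + 1) * r.eval x + (1 - x ^ 2) * (derivative r).eval x))) := by
        intro x hx
        obtain ⟨hx1, hx2⟩ := hx
        have h1x : (0 : ℝ) < 1 - x := by linarith
        have h2x : (0 : ℝ) < 1 + x := by linarith
        have hs : (0 : ℝ) < 1 - x ^ 2 := by nlinarith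
        rw [key' x ⟨hx1, hx2⟩, hgr, hg'r]
        have hB : (1 - x ^ 2) * (((j : ℝ) + 1) * (x + 1) ^ j * r.eval x
              + (x + 1) ^ (j + 1) * (derivative r).eval x)
            - (m : ℝ) * (1 + x) * ((x + 1) ^ (j + 1) * r.eval x)
            = (x + 1) ^ (j + 1) *
              (2 * ((j : ℝ) + 1) * r.eval x + (1 - x ^ 2) * (derivative r).eval x) := by
          rw [hmr, pow_succ]
          ring
        rw [hB]
        have hsplit : (x + 1 : ℝ) ^ (j + 1) * (1 - x ^ 2) ^ (((m : ℝ) - 1) / 2)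
            = (1 + x) ^ ((-(m : ℝ) - 1) / 2) * (1 - x) ^ (((m : ℝ) - 1) / 2) := by
          rw [show (1 - x ^ 2 : ℝ) = (1 - x) * (1 + x) by ring,
            Real.mul_rpow h1x.le h2x.le,
            show (x + 1 : ℝ) = 1 + x by ring,
            ← Real.rpow_natCast (1 + x) (j + 1)]
          have hcomb : (1 + x) ^ (((j + 1 : ℕ)) : ℝ) * (1 + x) ^ (((m : ℝ) - 1) / 2)
              = (1 + x) ^ ((-(m : ℝ) - 1) / 2) := by
            rw [← Real.rpow_add h2x]
            congr 1
            push_cast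
            linarith
          linear_combination ((1 - x) ^ (((m : ℝ) - 1) / 2)) * hcomb
        linear_combination
          (K * (2 * ((j : ℝ) + 1) * r.eval x + (1 - x ^ 2) * (derivative r).eval x)) * hsplit
      have hcont : ContinuousAt (fun x : ℝ => K *
          ((1 + x) ^ ((-(m : ℝ) - 1) / 2) * ((1 - x) ^ (((m : ℝ) - 1) / 2) *
            (2 * ((j : ℝ) + 1) * r.eval x + (1 - x ^ 2) * (derivative r).eval x)))) (-1) :=
        continuousAt_const.mul ((ContinuousAt.rpow_const
          (continuous_const.add continuous_id).continuousAt (Or.inr hE.le)).mul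
          ((ContinuousAt.rpow_const (continuous_const.sub continuous_id).continuousAt
            (Or.inl (by norm_num))).mul
            ((continuous_const.mul r.continuous).add
              ((continuous_const.sub (continuous_pow 2)).mul
                (derivative r).continuous)).continuousAt))
      have ht := tendsto_bot hcont hEq
      have hval : K * ((1 + (-1 : ℝ)) ^ ((-(m : ℝ) - 1) / 2) *
          ((1 - (-1 : ℝ)) ^ (((m : ℝ) - 1) / 2) *
            (2 * ((j : ℝ) + 1) * r.eval (-1) + (1 - (-1 : ℝ) ^ 2) * (derivative r).eval (-1)))) = 0 := by
        rw [show (1 : ℝ) + (-1) = 0 by norm_num, Real.zero_rpow hE.ne']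
        ring
      rwa [hval] at ht
    · -- m = -1
      subst hmeq
      rw [if_pos rfl]
      have hPc : ((X - C 1) ^ l.toNat * (X - C (-1)) ^ l.toNat : Polynomial ℝ)
          = (X - C (-1)) ^ l.toNat * (X - C 1) ^ l.toNat := mul_comm _ _
      have hkn : (l + -1).toNat ≤ l.toNat := by omega
      obtain ⟨r, hr⟩ := factor_iterate (-1) ((X - C 1) ^ l.toNat) l.toNat (l + -1).toNat hkn
      have hj1 : l.toNat - (l + -1).toNat = 1 := by omega
      have hgr : ∀ x : ℝ, g x = (x + 1) * r.eval x := by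
        intro x
        rw [hgdef]
        show (derivative^[(l + -1).toNat]
          ((X - C 1) ^ l.toNat * (X - C (-1)) ^ l.toNat : Polynomial ℝ)).eval x = _
        rw [hPc, hr, hj1, pow_one]
        simp [sub_neg_eq_add]
      have hg'r : ∀ x : ℝ, g' x = r.eval x + (x + 1) * (derivative r).eval x := by
        intro x
        rw [hg'def]
        show (derivative^[(l + -1).toNat + 1]
          ((X - C 1) ^ l.toNat * (X - C (-1)) ^ l.toNat : Polynomial ℝ)).eval x = _
        rw [Function.iterate_succ_apply', hPc, hr, hj1, pow_one, Polynomial.derivative_mul,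
          Polynomial.derivative_X_sub_C]
        simp [sub_neg_eq_add]
      have hEq : ∀ x ∈ Set.Ioo (-1 : ℝ) 1, Flm l (-1) x =
          K * ((1 - x)⁻¹ *
            (2 * r.eval x + (1 - x ^ 2) * (derivative r).eval x)) := by
        intro x hx
        obtain ⟨hx1, hx2⟩ := hx
        have h1x : (0 : ℝ) < 1 - x := by linarith
        have h2x : (0 : ℝ) < 1 + x := by linarith
        have hs : (0 : ℝ) < 1 - x ^ 2 := by nlinarith
        rw [key' x ⟨hx1, hx2⟩, hgr, hg'r]
        rw [show ((((-1 : ℤ)) : ℝ) - 1) / 2 = ((-1 : ℤ) : ℝ) by norm_num,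
          Real.rpow_intCast, zpow_neg_one]
        have hinner : (1 - x ^ 2 : ℝ)⁻¹ *
            ((1 - x ^ 2) * (r.eval x + (x + 1) * (derivative r).eval x) -
              ((-1 : ℤ) : ℝ) * (1 + x) * ((x + 1) * r.eval x))
            = (1 - x)⁻¹ * (2 * r.eval x + (1 - x ^ 2) * (derivative r).eval x) := by
          rw [show (1 - x ^ 2 : ℝ) = (1 - x) * (1 + x) by ring]
          field_simp
          ring
        rw [hinner]
      have hcont : ContinuousAt (fun x : ℝ => K * ((1 - x)⁻¹ *
          (2 * r.eval x + (1 - x ^ 2) * (derivative r).eval x))) (-1) :=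
        continuousAt_const.mul ((((continuous_const.sub continuous_id).continuousAt).inv₀
          (by norm_num)).mul
          ((continuous_const.mul r.continuous).add
            ((continuous_const.sub (continuous_pow 2)).mul
              (derivative r).continuous)).continuousAt)
      have ht := tendsto_bot hcont hEq
      have hval : K * ((1 - (-1 : ℝ))⁻¹ *
          (2 * r.eval (-1) + (1 - (-1 : ℝ) ^ 2) * (derivative r).eval (-1))) =
          (-1 : ℝ) ^ (l - 1) * Real.sqrt ((2 * (l : ℝ) + 1) / 2) := by
        have hR1 : r.eval (-1) = (l.toNat.factorial : ℝ) * (-2) ^ l.toNat := by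
          have h1 : g' (-1) = r.eval (-1) := by rw [hg'r]; ring_nf
          have h2 : g' (-1) = (l.toNat.factorial : ℝ) * (-2) ^ l.toNat := by
            rw [hg'def]
            show (derivative^[(l + -1).toNat + 1]
              ((X - C 1) ^ l.toNat * (X - C (-1)) ^ l.toNat : Polynomial ℝ)).eval (-1) = _
            rw [show (l + -1).toNat + 1 = l.toNat by omega]
            exact eval_bot l.toNat
          rw [← h1, h2]
        have hclm : clm l (-1) =
            Real.sqrt (((2 * (l : ℝ) + 1) / 2) * ((l : ℝ) * ((l : ℝ) + 1))) := by
          rw [clm]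
          congr 1
          have hN : l.toNat = (l.toNat - 1) + 1 := by omega
          rw [show (l - -1).toNat = (l.toNat - 1) + 2 by omega,
            show (l + -1).toNat = l.toNat - 1 by omega]
          set N := l.toNat - 1 with hNdef
          have hfac : ((N + 2).factorial : ℝ) = ((N : ℝ) + 2) * ((N : ℝ) + 1) * (N.factorial : ℝ) := by
            rw [Nat.factorial_succ, Nat.factorial_succ]; push_cast; ring
          have hlN : (l : ℝ) = (N : ℝ) + 1 := by
            rw [hlr, hN]; push_cast; ring
          rw [hfac, hlN]
          have hNf : (N.factorial : ℝ) ≠ 0 := Nat.cast_ne_zero.mpr (Nat.factorial_ne_zero _)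
          field_simp
          ring
        have h2l : (2 : ℝ) ^ l = 2 ^ l.toNat := by
          conv_lhs => rw [← hln]
          rw [zpow_natCast]
        have hz : ((-1 : ℝ)) ^ (-1 : ℤ) = -1 := by
          rw [zpow_neg_one]; norm_num
        have hsign : ((-1 : ℝ)) ^ (l - 1) = (-1 : ℝ) ^ (l.toNat + 1) := by
          have h1 : (-1 : ℝ) ^ (l - 1) = (-1 : ℝ) ^ (l + 1) := by
            rw [show l + 1 = l - 1 + 2 by ring, zpow_add₀ (by norm_num : (-1 : ℝ) ≠ 0)]
            norm_num
          rw [h1, show l + 1 = ((l.toNat + 1 : ℕ) : ℤ) by omega, zpow_natCast]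
        have hD0 : Real.sqrt ((l : ℝ) * ((l : ℝ) + 1)) ≠ 0 := (Real.sqrt_pos.mpr hd0).ne'
        have hDD : Real.sqrt ((l : ℝ) * ((l : ℝ) + 1)) * Real.sqrt ((l : ℝ) * ((l : ℝ) + 1)) =
            (l : ℝ) * ((l : ℝ) + 1) := Real.mul_self_sqrt hd0.le
        have hfne : (l.toNat.factorial : ℝ) ≠ 0 := Nat.cast_ne_zero.mpr (Nat.factorial_ne_zero _)
        rw [hR1, hK, hclm, h2l, hz, hsign,
          Real.sqrt_mul hq0, show ((-2 : ℝ)) ^ l.toNat = (-1) ^ l.toNat * 2 ^ l.toNat from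
            by rw [neg_pow], pow_succ]
        have h2n : ((2 : ℝ)) ^ l.toNat ≠ 0 := by positivity
        field_simp
        ring
      rwa [hval] at ht
    · rcases eq_or_lt_of_le (show (0 : ℤ) ≤ m by omega) with hm0 | hmpos
      · -- m = 0
        obtain rfl : m = 0 := hm0.symm
        rw [if_neg (by omega)]
        have ht := tendsto_bot (hm0C (-1)) (hm0Eq rfl)
        have hval : K * ((1 - (-1 : ℝ) ^ 2) ^ ((1 : ℝ) / 2) * g' (-1)) = 0 := by
          rw [show (1 : ℝ) - (-1 : ℝ) ^ 2 = 0 by norm_num, Real.zero_rpow (by norm_num)]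
          ring
        rwa [hval] at ht
      · -- m ≥ 1
        rw [if_neg (by omega)]
        have hm1' : (1 : ℝ) ≤ (m : ℝ) := by exact_mod_cast hmpos
        have he : (0 : ℝ) ≤ ((m : ℝ) - 1) / 2 := by linarith
        have hcont : ContinuousAt (fun x : ℝ => K * ((1 - x ^ 2) ^ (((m : ℝ) - 1) / 2) *
            ((1 - x ^ 2) * g' x - (m : ℝ) * (1 + x) * g x))) (-1) :=
          continuousAt_const.mul ((ContinuousAt.rpow_const
            (continuous_const.sub (continuous_pow 2)).continuousAt (Or.inr he)).mul
            hBc.continuousAt)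
        have ht := tendsto_bot hcont key'
        have hval : K * ((1 - (-1 : ℝ) ^ 2) ^ (((m : ℝ) - 1) / 2) *
            ((1 - (-1 : ℝ) ^ 2) * g' (-1) - (m : ℝ) * (1 + -1) * g (-1))) = 0 := by
          norm_num
        rwa [hval] at ht
end

section
/- Addition theorem for F_{lm}: for every integer l ≥ 1 and all x ∈ (−1, 1), ∑_{m=−l}^{l} [F_{lm}(x)]^2 = (2l + 1)/2. -/
open MeasureTheory

namespace FlmAux
open Polynomial

noncomputable def Q (n k : ℕ) : ℝ[X] := derivative^[k] ((X^2 - 1)^n)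

lemma Q_succ (n k : ℕ) : Q n (k+1) = derivative (Q n k) :=
  Function.iterate_succ_apply' _ _ _

lemma Q_zero (n : ℕ) : Q n 0 = (X^2-1)^n := rfl

lemma hasDerivAt_Q (n k : ℕ) (y : ℝ) :
    HasDerivAt (fun t => (Q n k).eval t) ((Q n (k+1)).eval y) y := by
  rw [Q_succ]; exact (Q n k).hasDerivAt y

lemma iteratedDeriv_w (n k : ℕ) :
    iteratedDeriv k (fun y : ℝ => (y^2 - 1)^n) = fun y => (Q n k).eval y := by
  induction k with
  | zero => simp [Q]
  | succ k ih =>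
      rw [iteratedDeriv_succ, ih]
      funext y
      rw [Q_succ]
      exact Polynomial.deriv _

lemma Q_top (n : ℕ) : Q n (2*n+1) = 0 := by
  apply Polynomial.iterate_derivative_eq_zero
  have h1 : (X^2 - 1 : ℝ[X]) = X^2 - C 1 := by simp
  have : ((X^2 - 1 : ℝ[X])^n).natDegree = 2*n := by
    rw [h1, Polynomial.natDegree_pow, Polynomial.natDegree_X_pow_sub_C, Nat.mul_comm]
  rw [this]; omega

lemma E0 (n : ℕ) (hn : 1 ≤ n) :
    (1 - X^2) * Q n 1 = C (-2*(n:ℝ)) * X * Q n 0 := by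
  rw [Q_succ, Q_zero, Polynomial.derivative_pow]
  have hd : derivative (X^2 - 1 : ℝ[X]) = 2 * X := by
    simp [Polynomial.derivative_X_pow, map_ofNat]
    norm_num
  rw [hd]
  have hpow : ((X^2 - 1 : ℝ[X]))^n = (X^2-1)^(n-1) * (X^2 - 1) := by
    rw [← pow_succ]; congr 1; omega
  rw [hpow]
  simp only [map_neg, map_mul, map_add, map_sub, map_ofNat, map_one, Polynomial.C_eq_natCast]
  ring

lemma Esucc (n : ℕ) (hn : 1 ≤ n) : ∀ k : ℕ,
    (1 - X^2) * Q n (k+2) = C (2*((k:ℝ)+1-n)) * X * Q n (k+1) - C (((k:ℝ)+1)*(2*n - k)) * Q n k := by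
  intro k
  induction k with
  | zero =>
      have h := congrArg derivative (E0 n hn)
      simp only [Polynomial.derivative_mul, Polynomial.derivative_sub, Polynomial.derivative_C,
        Polynomial.derivative_X, Polynomial.derivative_one, Polynomial.derivative_X_pow,
        ← Q_succ] at h
      simp only [map_neg, map_mul, map_add, map_sub, map_ofNat, map_one,
        Polynomial.C_eq_natCast] at h ⊢
      norm_num at h ⊢
      linear_combination h
  | succ k ih =>
      have h := congrArg derivative ih
      simp only [Polynomial.derivative_mul, Polynomial.derivative_sub, Polynomial.derivative_C,
        Polynomial.derivative_X, Polynomial.derivative_one, Polynomial.derivative_X_pow,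
        ← Q_succ] at h
      simp only [map_neg, map_mul, map_add, map_sub, map_ofNat, map_one,
        Polynomial.C_eq_natCast] at h ⊢
      push_cast at h ⊢
      norm_num at h ⊢
      linear_combination h

lemma Ekey (n k : ℕ) (hn : 1 ≤ n) (y : ℝ) :
    2*((k:ℝ)-n)*y*(Q n k).eval y
      = (1-y^2)*(Q n (k+1)).eval y + (k:ℝ)*(2*(n:ℝ)+1-k)*(Q n (k-1)).eval y := by
  cases k with
  | zero =>
      have h := congrArg (eval y) (E0 n hn)
      simp only [eval_mul, eval_sub, eval_add, eval_C, eval_X, eval_pow, eval_one] at h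
      linear_combination -h
  | succ j =>
      have h := congrArg (eval y) (Esucc n hn j)
      simp only [eval_mul, eval_sub, eval_add, eval_C, eval_X, eval_pow, eval_one] at h
      push_cast

      linear_combination -h

lemma Qfac (n : ℕ) : ∀ k, k ≤ n → ∃ p : ℝ[X], Q n k = (X^2-1)^(n-k) * p ∧
    (p.eval 1) * ((n-k).factorial : ℝ) = 2^k * (n.factorial : ℝ) := by
  intro k
  induction k with
  | zero =>
      intro _
      exact ⟨1, by simp [Q_zero], by simp⟩
  | succ k ih =>
      intro hk
      obtain ⟨p, hp, hv⟩ := ih (by omega)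
      refine ⟨C (2*((n:ℝ)-k)) * X * p + (X^2-1) * derivative p, ?_, ?_⟩
      · rw [Q_succ, hp, Polynomial.derivative_mul, Polynomial.derivative_pow]
        have hd : derivative (X^2 - 1 : ℝ[X]) = 2 * X := by
          simp [Polynomial.derivative_X_pow, map_ofNat]
          norm_num
        rw [hd]
        have h1 : n - k = (n - (k+1)) + 1 := by omega
        rw [h1]
        simp only [Nat.add_sub_cancel]
        have h2 : ((n - (k+1) + 1 : ℕ) : ℝ) = (n:ℝ) - k := by
          have e : n - (k+1) + 1 = n - k := by omega
          rw [e, Nat.cast_sub (by omega : k ≤ n)]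
        rw [h2]
        simp only [map_sub, map_mul, map_add, map_ofNat, map_one, Polynomial.C_eq_natCast]
        ring
      · simp only [eval_add, eval_mul, eval_C, eval_X, eval_sub, eval_pow, eval_one]
        norm_num
        have h3 : ((n - k).factorial : ℝ) = ((n-k:ℕ) : ℝ) * ((n - (k+1)).factorial : ℝ) := by
          have : n - k = (n - (k+1)) + 1 := by omega
          rw [this, Nat.factorial_succ]
          push_cast
          ring
        have h4 : ((n-k:ℕ):ℝ) = (n:ℝ) - k := by
          push_cast [Nat.cast_sub (by omega : k ≤ n)]
          ring
        have h5 : (n:ℝ) - k ≠ 0 := by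
          rw [← h4]
          have : 0 < n - k := by omega
          positivity
        calc (2*((n:ℝ)-k) * p.eval 1) * ((n-(k+1)).factorial : ℝ)
            = 2 * (p.eval 1 * (((n:ℝ)-k) * ((n-(k+1)).factorial : ℝ))) := by ring
          _ = 2 * (p.eval 1 * ((n-k).factorial : ℝ)) := by rw [h3, h4]
          _ = 2^(k+1) * (n.factorial : ℝ) := by rw [hv]; ring

lemma Qeval_one (n : ℕ) : (Q n n).eval 1 = 2^n * (n.factorial : ℝ) := by
  obtain ⟨p, hp, hv⟩ := Qfac n n le_rfl
  rw [hp]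
  simp at hv ⊢
  linarith [hv]



open Polynomial in
lemma Ulm_eq (n : ℕ) (m : ℤ) (h1 : -(n:ℤ) ≤ m) (h2 : m ≤ (n:ℤ)) (y : ℝ) :
    Ulm (n:ℤ) m y = clm (n:ℤ) m * ((-1:ℝ)^m / ((2:ℝ)^n * (n.factorial : ℝ))) *
      ((1 - y^2) ^ ((m:ℝ)/2) * (Q n ((n:ℤ)+m).toNat).eval y) := by
  have habs : |m| ≤ (n:ℤ) := abs_le.mpr ⟨h1, h2⟩
  rw [Ulm, if_pos habs, Plm]
  have hfun : (fun y:ℝ => (y^2-1)^((n:ℤ))) = fun y:ℝ => (y^2-1)^n := by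
    funext t; exact zpow_natCast _ n
  rw [hfun, iteratedDeriv_w]
  have h2n : (2:ℝ)^((n:ℤ)) = (2:ℝ)^n := zpow_natCast _ n
  rw [h2n, Int.toNat_natCast]
  ring

lemma Ulm_zero (n : ℕ) (m : ℤ) (h : ¬ |m| ≤ (n:ℤ)) : Ulm (n:ℤ) m = fun _ => 0 := by
  funext y; rw [Ulm, if_neg h]

lemma fact_cast_ne (j : ℕ) : ((j.factorial : ℝ)) ≠ 0 := by
  exact_mod_cast (Nat.factorial_pos j).ne'

lemma key1 (n : ℕ) (m : ℤ) (h1 : -(n:ℤ) ≤ m) (h2 : m < (n:ℤ)) :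
    Real.sqrt (((n:ℝ) - (m:ℝ)) * ((n:ℝ) + (m:ℝ) + 1)) * clm (n:ℤ) (m+1) = clm (n:ℤ) m := by
  have hm : (m:ℝ) < (n:ℝ) := by exact_mod_cast h2
  have hm2 : -(n:ℝ) ≤ (m:ℝ) := by exact_mod_cast h1
  have hrad : (0:ℝ) ≤ ((n:ℝ) - m) * ((n:ℝ) + m + 1) := by nlinarith
  rw [clm, clm, ← Real.sqrt_mul hrad]
  congr 1
  have e1 : ((n:ℤ) - (m+1)) = (n:ℤ) - m - 1 := by ring
  have e2 : ((n:ℤ) + (m+1)) = ((n:ℤ) + m) + 1 := by ring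
  rw [e1, e2]
  set A := ((n:ℤ) - m - 1).toNat with hA
  set B := ((n:ℤ) + m).toNat with hB
  have eA : ((n:ℤ) - m).toNat = A + 1 := by omega
  have eB : ((n:ℤ) + m + 1).toNat = B + 1 := by omega
  rw [eA, eB, Nat.factorial_succ, Nat.factorial_succ]
  have cA : ((A:ℝ) + 1) = (n:ℝ) - m := by
    have h : (A:ℤ) = (n:ℤ) - m - 1 := by omega
    have h' := congrArg (fun z : ℤ => (z:ℝ)) h
    push_cast at h'
    linarith
  have cB : ((B:ℝ) + 1) = (n:ℝ) + m + 1 := by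
    have h : (B:ℤ) = (n:ℤ) + m := by omega
    have h' := congrArg (fun z : ℤ => (z:ℝ)) h
    push_cast at h'
    linarith
  push_cast
  rw [cA, cB]
  have hBne : ((B.factorial : ℝ)) ≠ 0 := fact_cast_ne B
  have hne2 : (n:ℝ) + m + 1 ≠ 0 := by linarith
  field_simp

lemma key2 (n : ℕ) (m : ℤ) (h1 : -(n:ℤ) < m) (h2 : m ≤ (n:ℤ)) :
    Real.sqrt (((n:ℝ) + (m:ℝ)) * ((n:ℝ) - (m:ℝ) + 1)) * clm (n:ℤ) (m-1)
      = ((n:ℝ) + (m:ℝ)) * ((n:ℝ) - (m:ℝ) + 1) * clm (n:ℤ) m := by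
  have hm : (m:ℝ) ≤ (n:ℝ) := by exact_mod_cast h2
  have hm2 : -(n:ℝ) < (m:ℝ) := by exact_mod_cast h1
  have ht : (0:ℝ) ≤ ((n:ℝ) + m) * ((n:ℝ) - m + 1) := by nlinarith
  rw [clm, clm]
  rw [show ((n:ℝ) + m) * ((n:ℝ) - m + 1) * Real.sqrt ((2 * ((n:ℤ):ℝ) + 1) / 2 * ((((n:ℤ) - m).toNat.factorial : ℝ)) / ((((n:ℤ) + m).toNat.factorial : ℝ)))
      = Real.sqrt ((((n:ℝ) + m) * ((n:ℝ) - m + 1))^2 * ((2 * ((n:ℤ):ℝ) + 1) / 2 * ((((n:ℤ) - m).toNat.factorial : ℝ)) / ((((n:ℤ) + m).toNat.factorial : ℝ))))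
      from by rw [Real.sqrt_mul (sq_nonneg _), Real.sqrt_sq ht]]
  rw [← Real.sqrt_mul ht]
  congr 1
  have e1 : ((n:ℤ) - (m-1)) = ((n:ℤ) - m) + 1 := by ring
  have e2 : ((n:ℤ) + (m-1)) = ((n:ℤ) + m) - 1 := by ring
  rw [e1, e2]
  set Cc := ((n:ℤ) - m).toNat with hC
  set Dn := ((n:ℤ) + m - 1).toNat with hD
  have eC : ((n:ℤ) - m + 1).toNat = Cc + 1 := by omega
  have eD : ((n:ℤ) + m).toNat = Dn + 1 := by omega
  rw [eC, eD, Nat.factorial_succ, Nat.factorial_succ]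
  have cC : ((Cc:ℝ) + 1) = (n:ℝ) - m + 1 := by
    have h : (Cc:ℤ) = (n:ℤ) - m := by omega
    have h' := congrArg (fun z : ℤ => (z:ℝ)) h
    push_cast at h'
    linarith
  have cD : ((Dn:ℝ) + 1) = (n:ℝ) + m := by
    have h : (Dn:ℤ) = (n:ℤ) + m - 1 := by omega
    have h' := congrArg (fun z : ℤ => (z:ℝ)) h
    push_cast at h'
    linarith
  push_cast
  rw [cC, cD]
  have hDne : ((Dn.factorial : ℝ)) ≠ 0 := fact_cast_ne Dn
  have hne2 : (n:ℝ) + m ≠ 0 := by linarith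
  field_simp

open Polynomial in
lemma Ulm_hasDerivAt (n : ℕ) (m : ℤ) (h1 : -(n:ℤ) ≤ m) (h2 : m ≤ (n:ℤ)) (y : ℝ)
    (hy : y ∈ Set.Ioo (-1:ℝ) 1) :
    HasDerivAt (Ulm (n:ℤ) m)
      (clm (n:ℤ) m * ((-1:ℝ)^m / ((2:ℝ)^n * (n.factorial : ℝ))) *
        (((m:ℝ)/2 * (1-y^2)^((m:ℝ)/2-1) * (-(2*y))) * (Q n ((n:ℤ)+m).toNat).eval y
          + (1-y^2)^((m:ℝ)/2) * (Q n (((n:ℤ)+m).toNat+1)).eval y)) y := by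
  have hs : (0:ℝ) < 1 - y^2 := by
    obtain ⟨hy1, hy2⟩ := hy; nlinarith
  have hU : Ulm (n:ℤ) m = fun t => clm (n:ℤ) m * ((-1:ℝ)^m / ((2:ℝ)^n * (n.factorial : ℝ))) *
      ((1 - t^2) ^ ((m:ℝ)/2) * (Q n ((n:ℤ)+m).toNat).eval t) := by
    funext t
    rw [Ulm_eq n m h1 h2 t]
  rw [hU]
  have hi : HasDerivAt (fun t:ℝ => 1 - t^2) (-(2*y)) y := by
    simpa using ((hasDerivAt_pow 2 y).const_sub 1)
  have houter : HasDerivAt (fun t:ℝ => t ^ ((m:ℝ)/2)) (((m:ℝ)/2) * (1-y^2) ^ ((m:ℝ)/2 - 1)) (1-y^2) :=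
    Real.hasDerivAt_rpow_const (Or.inl hs.ne')
  have hrpow : HasDerivAt (fun t:ℝ => (1 - t^2) ^ ((m:ℝ)/2))
      ((((m:ℝ)/2) * (1-y^2) ^ ((m:ℝ)/2 - 1)) * (-(2*y))) y := by
    have := houter.comp y hi; exact this
  have hmul := hrpow.mul (hasDerivAt_Q n ((n:ℤ)+m).toNat y)
  have := hmul.const_mul (clm (n:ℤ) m * ((-1:ℝ)^m / ((2:ℝ)^n * (n.factorial : ℝ))))
  exact this

noncomputable def aST (n : ℕ) (m : ℤ) : ℝ := Real.sqrt (((n:ℝ) - (m:ℝ)) * ((n:ℝ) + (m:ℝ) + 1))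
noncomputable def bST (n : ℕ) (m : ℤ) : ℝ := Real.sqrt (((n:ℝ) + (m:ℝ)) * ((n:ℝ) - (m:ℝ) + 1))

lemma neg_one_zpow_add_one (m : ℤ) : (-1:ℝ)^(m+1) = -((-1:ℝ)^m) := by
  rw [zpow_add_one₀ (by norm_num : (-1:ℝ) ≠ 0)]; ring

lemma neg_one_zpow_sub_one (m : ℤ) : (-1:ℝ)^(m-1) = -((-1:ℝ)^m) := by
  rw [zpow_sub_one₀ (by norm_num : (-1:ℝ) ≠ 0)]; norm_num

open Polynomial in
lemma expandA (n : ℕ) (m : ℤ) (h1 : -(n:ℤ) ≤ m) (h2 : m ≤ (n:ℤ)) (y : ℝ) :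
    aST n m * Ulm (n:ℤ) (m+1) y
      = clm (n:ℤ) m * (-((-1:ℝ)^m) / ((2:ℝ)^n * (n.factorial : ℝ)) *
          ((1 - y^2) ^ (((m:ℝ)+1)/2) * (Q n (((n:ℤ)+m).toNat + 1)).eval y)) := by
  by_cases hml : m = (n:ℤ)
  · subst hml
    have habs : ¬ |(n:ℤ)+1| ≤ (n:ℤ) := by
      rw [abs_of_nonneg (by positivity)]; omega
    rw [Ulm_zero n _ habs]
    have hk : ((n:ℤ)+(n:ℤ)).toNat + 1 = 2*n+1 := by omega
    rw [hk, Q_top]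
    simp
  · have h2' : m + 1 ≤ (n:ℤ) := by omega
    have hkey := key1 n m h1 (by omega)
    rw [Ulm_eq n (m+1) (by omega) h2' y, aST,
      show ((n:ℤ)+(m+1)).toNat = ((n:ℤ)+m).toNat + 1 from by omega,
      neg_one_zpow_add_one]
    push_cast
    linear_combination (-((-1:ℝ)^m) / ((2:ℝ)^n * (n.factorial:ℝ)) *
      ((1-y^2) ^ (((m:ℝ)+1)/2) * (Q n (((n:ℤ)+m).toNat + 1)).eval y)) * hkey

open Polynomial in
lemma expandB (n : ℕ) (m : ℤ) (h1 : -(n:ℤ) ≤ m) (h2 : m ≤ (n:ℤ)) (y : ℝ) :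
    bST n m * Ulm (n:ℤ) (m-1) y
      = ((n:ℝ)+(m:ℝ)) * ((n:ℝ)-(m:ℝ)+1) * clm (n:ℤ) m * (-((-1:ℝ)^m) / ((2:ℝ)^n * (n.factorial : ℝ)) *
          ((1 - y^2) ^ (((m:ℝ)-1)/2) * (Q n (((n:ℤ)+m).toNat - 1)).eval y)) := by
  by_cases hml : m = -(n:ℤ)
  · subst hml
    have habs : ¬ |-(n:ℤ)-1| ≤ (n:ℤ) := by
      rw [abs_of_nonpos (by omega)]; omega
    rw [Ulm_zero n _ habs]
    have hz : (n:ℝ) + ((-(n:ℤ) : ℤ):ℝ) = 0 := by push_cast; ring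
    rw [hz]
    ring
  · have h1' : -(n:ℤ) < m := by omega
    have hkey := key2 n m h1' h2
    rw [Ulm_eq n (m-1) (by omega) (by omega) y, bST,
      show ((n:ℤ)+(m-1)).toNat = ((n:ℤ)+m).toNat - 1 from by omega,
      neg_one_zpow_sub_one]
    push_cast
    linear_combination (-((-1:ℝ)^m) / ((2:ℝ)^n * (n.factorial:ℝ)) *
      ((1-y^2) ^ (((m:ℝ)-1)/2) * (Q n (((n:ℤ)+m).toNat - 1)).eval y)) * hkey

open Polynomial in
lemma R1 (n : ℕ) (hn1 : 1 ≤ n) (m : ℤ) (h1 : -(n:ℤ) ≤ m) (h2 : m ≤ (n:ℤ)) (y : ℝ)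
    (hy : y ∈ Set.Ioo (-1:ℝ) 1) :
    2 * Real.sqrt (1-y^2) * deriv (Ulm (n:ℤ) m) y
      = bST n m * Ulm (n:ℤ) (m-1) y - aST n m * Ulm (n:ℤ) (m+1) y := by
  have hs : (0:ℝ) < 1 - y^2 := by obtain ⟨hy1, hy2⟩ := hy; nlinarith
  set k : ℕ := ((n:ℤ)+m).toNat with hk
  have kc : ((k:ℕ):ℝ) = (n:ℝ) + (m:ℝ) := by
    have h : ((k:ℕ):ℤ) = (n:ℤ) + m := by omega
    have h' := congrArg (fun z : ℤ => (z:ℝ)) h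
    push_cast at h'
    exact_mod_cast h'
  have hE := Ekey n k hn1 y
  rw [kc] at hE
  rw [(Ulm_hasDerivAt n m h1 h2 y hy).deriv, expandA n m h1 h2 y, expandB n m h1 h2 y]
  have eqA : (1-y^2) ^ (((m:ℝ)+1)/2) = (1-y^2) ^ ((m:ℝ)/2 - 1) * (1-y^2) * Real.sqrt (1-y^2) := by
    rw [show ((m:ℝ)+1)/2 = ((m:ℝ)/2 - 1) + 1 + 1/2 from by ring, Real.rpow_add hs,
      Real.rpow_add hs, Real.rpow_one, Real.sqrt_eq_rpow]
  have eqB : (1-y^2) ^ (((m:ℝ)-1)/2) = (1-y^2) ^ ((m:ℝ)/2 - 1) * Real.sqrt (1-y^2) := by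
    rw [show ((m:ℝ)-1)/2 = ((m:ℝ)/2 - 1) + 1/2 from by ring, Real.rpow_add hs,
      Real.sqrt_eq_rpow]
  have eqC : (1-y^2) ^ ((m:ℝ)/2) = (1-y^2) ^ ((m:ℝ)/2 - 1) * (1-y^2) := by
    conv_lhs => rw [show (m:ℝ)/2 = ((m:ℝ)/2 - 1) + 1 from by ring]
    rw [Real.rpow_add hs, Real.rpow_one]
  rw [eqA, eqB, eqC]
  linear_combination (-(clm (↑n) m * ((-1:ℝ)^m / ((2:ℝ)^n * (n.factorial:ℝ))) *
    ((1-y^2) ^ ((m:ℝ)/2-1)) * Real.sqrt (1-y^2))) * hE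

open Polynomial in
lemma R2 (n : ℕ) (hn1 : 1 ≤ n) (m : ℤ) (h1 : -(n:ℤ) ≤ m) (h2 : m ≤ (n:ℤ)) (y : ℝ)
    (hy : y ∈ Set.Ioo (-1:ℝ) 1) :
    2 * (m:ℝ) * y * Ulm (n:ℤ) m y
      = -Real.sqrt (1-y^2) * (aST n m * Ulm (n:ℤ) (m+1) y + bST n m * Ulm (n:ℤ) (m-1) y) := by
  have hs : (0:ℝ) < 1 - y^2 := by obtain ⟨hy1, hy2⟩ := hy; nlinarith
  set k : ℕ := ((n:ℤ)+m).toNat with hk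
  have kc : ((k:ℕ):ℝ) = (n:ℝ) + (m:ℝ) := by
    have h : ((k:ℕ):ℤ) = (n:ℤ) + m := by omega
    have h' := congrArg (fun z : ℤ => (z:ℝ)) h
    push_cast at h'
    exact_mod_cast h'
  have hE := Ekey n k hn1 y
  rw [kc] at hE
  have hrt : Real.sqrt (1-y^2) * Real.sqrt (1-y^2) = 1 - y^2 := Real.mul_self_sqrt hs.le
  rw [Ulm_eq n m h1 h2 y, expandA n m h1 h2 y, expandB n m h1 h2 y]
  have eqA : (1-y^2) ^ (((m:ℝ)+1)/2) = (1-y^2) ^ ((m:ℝ)/2 - 1) * (1-y^2) * Real.sqrt (1-y^2) := by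
    rw [show ((m:ℝ)+1)/2 = ((m:ℝ)/2 - 1) + 1 + 1/2 from by ring, Real.rpow_add hs,
      Real.rpow_add hs, Real.rpow_one, Real.sqrt_eq_rpow]
  have eqB : (1-y^2) ^ (((m:ℝ)-1)/2) = (1-y^2) ^ ((m:ℝ)/2 - 1) * Real.sqrt (1-y^2) := by
    rw [show ((m:ℝ)-1)/2 = ((m:ℝ)/2 - 1) + 1/2 from by ring, Real.rpow_add hs,
      Real.sqrt_eq_rpow]
  have eqC : (1-y^2) ^ ((m:ℝ)/2) = (1-y^2) ^ ((m:ℝ)/2 - 1) * (1-y^2) := by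
    conv_lhs => rw [show (m:ℝ)/2 = ((m:ℝ)/2 - 1) + 1 from by ring]
    rw [Real.rpow_add hs, Real.rpow_one]
  rw [eqA, eqB, eqC]
  linear_combination (clm (↑n) m * ((-1:ℝ)^m / ((2:ℝ)^n * (n.factorial:ℝ))) *
      ((1-y^2) ^ ((m:ℝ)/2-1)) * (1-y^2)) * hE
    - (clm (↑n) m * ((-1:ℝ)^m / ((2:ℝ)^n * (n.factorial:ℝ))) * ((1-y^2) ^ ((m:ℝ)/2-1)) *
      ((1-y^2) * (Q n (k+1)).eval y + ((n:ℝ)+(m:ℝ))*((n:ℝ)-(m:ℝ)+1) * (Q n (k-1)).eval y)) * hrt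

-- ---------- sum helpers ----------

lemma reindex_up (n : ℕ) (f : ℤ → ℝ) (htop : f ((n:ℤ)+1) = 0) (hbot : f (-(n:ℤ)) = 0) :
    ∑ m ∈ Finset.Icc (-(n:ℤ)) (n:ℤ), f (m+1) = ∑ m ∈ Finset.Icc (-(n:ℤ)) (n:ℤ), f m := by
  have h1 : ∑ m ∈ Finset.Icc (-(n:ℤ)) (n:ℤ), f (m+1)
      = ∑ j ∈ Finset.Icc (-(n:ℤ)+1) ((n:ℤ)+1), f j := by
    rw [← Finset.map_add_right_Icc (-(n:ℤ)) (n:ℤ) 1, Finset.sum_map]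
    rfl
  rw [h1]
  have h2 : ∑ j ∈ Finset.Icc (-(n:ℤ)+1) ((n:ℤ)+1), f j
      = ∑ j ∈ Finset.Icc (-(n:ℤ)) ((n:ℤ)+1), f j := by
    apply Finset.sum_subset
    · intro j hj; simp only [Finset.mem_Icc] at *; omega
    · intro j hj hnj
      simp only [Finset.mem_Icc] at hj hnj
      have hje : j = -(n:ℤ) := by omega
      rw [hje]; exact hbot
  have h3 : ∑ j ∈ Finset.Icc (-(n:ℤ)) ((n:ℤ)), f j
      = ∑ j ∈ Finset.Icc (-(n:ℤ)) ((n:ℤ)+1), f j := by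
    apply Finset.sum_subset
    · intro j hj; simp only [Finset.mem_Icc] at *; omega
    · intro j hj hnj
      simp only [Finset.mem_Icc] at hj hnj
      have hje : j = (n:ℤ)+1 := by omega
      rw [hje]; exact htop
  rw [h2, ← h3]

lemma reindex_down (n : ℕ) (f : ℤ → ℝ) (hbot : f (-(n:ℤ)-1) = 0) (htop : f ((n:ℤ)) = 0) :
    ∑ m ∈ Finset.Icc (-(n:ℤ)) (n:ℤ), f (m-1) = ∑ m ∈ Finset.Icc (-(n:ℤ)) (n:ℤ), f m := by
  have h1 : ∑ m ∈ Finset.Icc (-(n:ℤ)) (n:ℤ), f (m-1)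
      = ∑ j ∈ Finset.Icc (-(n:ℤ)+(-1)) ((n:ℤ)+(-1)), f j := by
    rw [← Finset.map_add_right_Icc (-(n:ℤ)) (n:ℤ) (-1), Finset.sum_map]
    rfl
  rw [h1]
  have h2 : ∑ j ∈ Finset.Icc (-(n:ℤ)+(-1)) ((n:ℤ)+(-1)), f j
      = ∑ j ∈ Finset.Icc (-(n:ℤ)-1) ((n:ℤ)), f j := by
    apply Finset.sum_subset
    · intro j hj; simp only [Finset.mem_Icc] at *; omega
    · intro j hj hnj
      simp only [Finset.mem_Icc] at hj hnj
      have hje : j = (n:ℤ) := by omega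
      rw [hje]; exact htop
  have h3 : ∑ j ∈ Finset.Icc (-(n:ℤ)) ((n:ℤ)), f j
      = ∑ j ∈ Finset.Icc (-(n:ℤ)-1) ((n:ℤ)), f j := by
    apply Finset.sum_subset
    · intro j hj; simp only [Finset.mem_Icc] at *; omega
    · intro j hj hnj
      simp only [Finset.mem_Icc] at hj hnj
      have hje : j = -(n:ℤ)-1 := by omega
      rw [hje]; exact hbot
  rw [h2, ← h3]

lemma Ulm_top (n : ℕ) (y : ℝ) : Ulm (n:ℤ) ((n:ℤ)+1) y = 0 := by
  have habs : ¬ |(n:ℤ)+1| ≤ (n:ℤ) := by rw [abs_of_nonneg (by positivity)]; omega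
  rw [Ulm, if_neg habs]

lemma Ulm_bot (n : ℕ) (y : ℝ) : Ulm (n:ℤ) (-(n:ℤ)-1) y = 0 := by
  have habs : ¬ |-(n:ℤ)-1| ≤ (n:ℤ) := by rw [abs_of_nonpos (by omega)]; omega
  rw [Ulm, if_neg habs]

lemma ab_eq (n : ℕ) (m : ℤ) : aST n m = bST n (m+1) := by
  rw [aST, bST]; congr 1; push_cast; ring

lemma aST_top (n : ℕ) : aST n (n:ℤ) = 0 := by
  rw [aST, show ((n:ℝ) - ((n:ℤ):ℝ)) * ((n:ℝ) + ((n:ℤ):ℝ) + 1) = 0 from by push_cast; ring]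
  exact Real.sqrt_zero

lemma bST_bot (n : ℕ) : bST n (-(n:ℤ)) = 0 := by
  rw [bST]
  push_cast
  rw [show ((n:ℝ) + -(n:ℝ)) * ((n:ℝ) - -(n:ℝ) + 1) = 0 from by ring]
  exact Real.sqrt_zero

lemma aST_sq (n : ℕ) (m : ℤ) (h1 : -(n:ℤ) ≤ m) (h2 : m ≤ (n:ℤ)) :
    aST n m ^ 2 = ((n:ℝ) - (m:ℝ)) * ((n:ℝ) + (m:ℝ) + 1) := by
  have hm : (m:ℝ) ≤ (n:ℝ) := by exact_mod_cast h2
  have hm2 : -(n:ℝ) ≤ (m:ℝ) := by exact_mod_cast h1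
  exact Real.sq_sqrt (by nlinarith)

lemma bST_sq (n : ℕ) (m : ℤ) (h1 : -(n:ℤ) ≤ m) (h2 : m ≤ (n:ℤ)) :
    bST n m ^ 2 = ((n:ℝ) + (m:ℝ)) * ((n:ℝ) - (m:ℝ) + 1) := by
  have hm : (m:ℝ) ≤ (n:ℝ) := by exact_mod_cast h2
  have hm2 : -(n:ℝ) ≤ (m:ℝ) := by exact_mod_cast h1
  exact Real.sq_sqrt (by nlinarith)

/-- general telescoping: shifting the `aST`-sum into the `bST`-sum. -/
lemma telescope (n : ℕ) (y : ℝ) (w : ℤ → ℝ) :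
    ∑ m ∈ Finset.Icc (-(n:ℤ)) (n:ℤ), w m * (aST n m * Ulm (n:ℤ) m y * Ulm (n:ℤ) (m+1) y)
      = ∑ m ∈ Finset.Icc (-(n:ℤ)) (n:ℤ), w (m-1) * (bST n m * Ulm (n:ℤ) (m-1) y * Ulm (n:ℤ) m y) := by
  have h := reindex_up n (fun j => w (j-1) * (bST n j * Ulm (n:ℤ) (j-1) y * Ulm (n:ℤ) j y))
    (by rw [Ulm_top n y]; ring)
    (by rw [bST_bot n]; ring)
  rw [← h]
  apply Finset.sum_congr rfl
  intro m hm
  simp only [add_sub_cancel_right]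
  rw [ab_eq n m]

-- ---------- gU and g1U ----------

noncomputable def gU (n : ℕ) (y : ℝ) : ℝ :=
  ∑ m ∈ Finset.Icc (-(n:ℤ)) (n:ℤ), (Ulm (n:ℤ) m y)^2

noncomputable def g1U (n : ℕ) (y : ℝ) : ℝ :=
  ∑ m ∈ Finset.Icc (-(n:ℤ)) (n:ℤ), (m:ℝ) * (Ulm (n:ℤ) m y)^2

noncomputable def cval (n : ℕ) (y : ℝ) : ℝ :=
  ∑ m ∈ Finset.Icc (-(n:ℤ)) (n:ℤ), bST n m * Ulm (n:ℤ) (m-1) y * Ulm (n:ℤ) m y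

lemma Ulm_hasDerivAt' (n : ℕ) (m : ℤ) (h1 : -(n:ℤ) ≤ m) (h2 : m ≤ (n:ℤ)) (y : ℝ)
    (hy : y ∈ Set.Ioo (-1:ℝ) 1) : HasDerivAt (Ulm (n:ℤ) m) (deriv (Ulm (n:ℤ) m) y) y := by
  have h := Ulm_hasDerivAt n m h1 h2 y hy
  rw [h.deriv]
  exact h

lemma cross_zero (n : ℕ) (hn1 : 1 ≤ n) (y : ℝ) (hy : y ∈ Set.Ioo (-1:ℝ) 1) :
    ∑ m ∈ Finset.Icc (-(n:ℤ)) (n:ℤ), Ulm (n:ℤ) m y *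
      (bST n m * Ulm (n:ℤ) (m-1) y - aST n m * Ulm (n:ℤ) (m+1) y) = 0 := by
  have ht := telescope n y (fun _ => (1:ℝ))
  simp only [one_mul] at ht
  simp only [mul_sub]
  rw [Finset.sum_sub_distrib]
  have e1 : ∑ m ∈ Finset.Icc (-(n:ℤ)) (n:ℤ), Ulm (n:ℤ) m y * (bST n m * Ulm (n:ℤ) (m-1) y)
      = ∑ m ∈ Finset.Icc (-(n:ℤ)) (n:ℤ), bST n m * Ulm (n:ℤ) (m-1) y * Ulm (n:ℤ) m y :=
    Finset.sum_congr rfl (by intros; ring)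
  have e2 : ∑ m ∈ Finset.Icc (-(n:ℤ)) (n:ℤ), Ulm (n:ℤ) m y * (aST n m * Ulm (n:ℤ) (m+1) y)
      = ∑ m ∈ Finset.Icc (-(n:ℤ)) (n:ℤ), aST n m * Ulm (n:ℤ) m y * Ulm (n:ℤ) (m+1) y :=
    Finset.sum_congr rfl (by intros; ring)
  rw [e1, e2, ht]
  ring

lemma m_cross (n : ℕ) (y : ℝ) :
    ∑ m ∈ Finset.Icc (-(n:ℤ)) (n:ℤ), (m:ℝ) * Ulm (n:ℤ) m y *
      (bST n m * Ulm (n:ℤ) (m-1) y - aST n m * Ulm (n:ℤ) (m+1) y) = cval n y := by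
  have ht := telescope n y (fun j => (j:ℝ))
  rw [cval]
  have e2 : ∑ m ∈ Finset.Icc (-(n:ℤ)) (n:ℤ), (m:ℝ) * (aST n m * Ulm (n:ℤ) m y * Ulm (n:ℤ) (m+1) y)
      = ∑ m ∈ Finset.Icc (-(n:ℤ)) (n:ℤ), ((m:ℝ)-1) * (bST n m * Ulm (n:ℤ) (m-1) y * Ulm (n:ℤ) m y) := by
    rw [ht]
    apply Finset.sum_congr rfl
    intro m hm
    push_cast
    ring
  calc ∑ m ∈ Finset.Icc (-(n:ℤ)) (n:ℤ), (m:ℝ) * Ulm (n:ℤ) m y *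
      (bST n m * Ulm (n:ℤ) (m-1) y - aST n m * Ulm (n:ℤ) (m+1) y)
      = ∑ m ∈ Finset.Icc (-(n:ℤ)) (n:ℤ), ((m:ℝ) * (bST n m * Ulm (n:ℤ) (m-1) y * Ulm (n:ℤ) m y)
          - (m:ℝ) * (aST n m * Ulm (n:ℤ) m y * Ulm (n:ℤ) (m+1) y)) :=
        Finset.sum_congr rfl (by intros; ring)
    _ = (∑ m ∈ Finset.Icc (-(n:ℤ)) (n:ℤ), (m:ℝ) * (bST n m * Ulm (n:ℤ) (m-1) y * Ulm (n:ℤ) m y))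
          - ∑ m ∈ Finset.Icc (-(n:ℤ)) (n:ℤ), (m:ℝ) * (aST n m * Ulm (n:ℤ) m y * Ulm (n:ℤ) (m+1) y) :=
        Finset.sum_sub_distrib _ _
    _ = ∑ m ∈ Finset.Icc (-(n:ℤ)) (n:ℤ), bST n m * Ulm (n:ℤ) (m-1) y * Ulm (n:ℤ) m y := by
        rw [e2, ← Finset.sum_sub_distrib]
        apply Finset.sum_congr rfl
        intro m hm
        ring

lemma S_sum (n : ℕ) (y : ℝ) :
    ∑ m ∈ Finset.Icc (-(n:ℤ)) (n:ℤ), Ulm (n:ℤ) m y *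
      (aST n m * Ulm (n:ℤ) (m+1) y + bST n m * Ulm (n:ℤ) (m-1) y) = 2 * cval n y := by
  have ht := telescope n y (fun _ => (1:ℝ))
  simp only [one_mul] at ht
  rw [cval]
  calc ∑ m ∈ Finset.Icc (-(n:ℤ)) (n:ℤ), Ulm (n:ℤ) m y *
      (aST n m * Ulm (n:ℤ) (m+1) y + bST n m * Ulm (n:ℤ) (m-1) y)
      = ∑ m ∈ Finset.Icc (-(n:ℤ)) (n:ℤ), (aST n m * Ulm (n:ℤ) m y * Ulm (n:ℤ) (m+1) y
          + bST n m * Ulm (n:ℤ) (m-1) y * Ulm (n:ℤ) m y) :=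
        Finset.sum_congr rfl (by intros; ring)
    _ = (∑ m ∈ Finset.Icc (-(n:ℤ)) (n:ℤ), aST n m * Ulm (n:ℤ) m y * Ulm (n:ℤ) (m+1) y)
          + ∑ m ∈ Finset.Icc (-(n:ℤ)) (n:ℤ), bST n m * Ulm (n:ℤ) (m-1) y * Ulm (n:ℤ) m y :=
        Finset.sum_add_distrib
    _ = 2 * ∑ m ∈ Finset.Icc (-(n:ℤ)) (n:ℤ), bST n m * Ulm (n:ℤ) (m-1) y * Ulm (n:ℤ) m y := by
        rw [ht]; ring

lemma gU_hasDerivAt (n : ℕ) (y : ℝ) (hy : y ∈ Set.Ioo (-1:ℝ) 1) :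
    HasDerivAt (gU n)
      (∑ m ∈ Finset.Icc (-(n:ℤ)) (n:ℤ), 2 * Ulm (n:ℤ) m y * deriv (Ulm (n:ℤ) m) y) y := by
  apply HasDerivAt.fun_sum
  intro m hm
  obtain ⟨h1, h2⟩ := Finset.mem_Icc.mp hm
  have h := (Ulm_hasDerivAt' n m h1 h2 y hy).fun_pow 2
  simpa [mul_comm, mul_assoc, mul_left_comm] using h

lemma g1U_hasDerivAt (n : ℕ) (y : ℝ) (hy : y ∈ Set.Ioo (-1:ℝ) 1) :
    HasDerivAt (g1U n)
      (∑ m ∈ Finset.Icc (-(n:ℤ)) (n:ℤ), (m:ℝ) * (2 * Ulm (n:ℤ) m y * deriv (Ulm (n:ℤ) m) y)) y := by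
  apply HasDerivAt.fun_sum
  intro m hm
  obtain ⟨h1, h2⟩ := Finset.mem_Icc.mp hm
  have h := ((Ulm_hasDerivAt' n m h1 h2 y hy).pow 2).const_mul (m:ℝ)
  simpa [mul_comm, mul_assoc, mul_left_comm] using h

lemma sqrt_pos_of_mem (y : ℝ) (hy : y ∈ Set.Ioo (-1:ℝ) 1) : 0 < Real.sqrt (1-y^2) := by
  have hs : (0:ℝ) < 1 - y^2 := by obtain ⟨hy1, hy2⟩ := hy; nlinarith
  exact Real.sqrt_pos.mpr hs

lemma gU_deriv_sum_zero (n : ℕ) (hn1 : 1 ≤ n) (y : ℝ) (hy : y ∈ Set.Ioo (-1:ℝ) 1) :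
    ∑ m ∈ Finset.Icc (-(n:ℤ)) (n:ℤ), 2 * Ulm (n:ℤ) m y * deriv (Ulm (n:ℤ) m) y = 0 := by
  have hr := sqrt_pos_of_mem y hy
  have key : Real.sqrt (1-y^2) *
      ∑ m ∈ Finset.Icc (-(n:ℤ)) (n:ℤ), 2 * Ulm (n:ℤ) m y * deriv (Ulm (n:ℤ) m) y
      = ∑ m ∈ Finset.Icc (-(n:ℤ)) (n:ℤ), Ulm (n:ℤ) m y *
          (bST n m * Ulm (n:ℤ) (m-1) y - aST n m * Ulm (n:ℤ) (m+1) y) := by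
    rw [Finset.mul_sum]
    apply Finset.sum_congr rfl
    intro m hm
    obtain ⟨h1, h2⟩ := Finset.mem_Icc.mp hm
    have hR := R1 n hn1 m h1 h2 y hy
    linear_combination (Ulm (n:ℤ) m y) * hR
  rw [cross_zero n hn1 y hy] at key
  exact (mul_eq_zero.mp key).resolve_left hr.ne'

lemma g1U_deriv_sum (n : ℕ) (hn1 : 1 ≤ n) (y : ℝ) (hy : y ∈ Set.Ioo (-1:ℝ) 1) :
    Real.sqrt (1-y^2) *
      (∑ m ∈ Finset.Icc (-(n:ℤ)) (n:ℤ), (m:ℝ) * (2 * Ulm (n:ℤ) m y * deriv (Ulm (n:ℤ) m) y))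
      = cval n y := by
  have key : Real.sqrt (1-y^2) *
      ∑ m ∈ Finset.Icc (-(n:ℤ)) (n:ℤ), (m:ℝ) * (2 * Ulm (n:ℤ) m y * deriv (Ulm (n:ℤ) m) y)
      = ∑ m ∈ Finset.Icc (-(n:ℤ)) (n:ℤ), (m:ℝ) * Ulm (n:ℤ) m y *
          (bST n m * Ulm (n:ℤ) (m-1) y - aST n m * Ulm (n:ℤ) (m+1) y) := by
    rw [Finset.mul_sum]
    apply Finset.sum_congr rfl
    intro m hm
    obtain ⟨h1, h2⟩ := Finset.mem_Icc.mp hm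
    have hR := R1 n hn1 m h1 h2 y hy
    linear_combination ((m:ℝ) * Ulm (n:ℤ) m y) * hR
  rw [key, m_cross n y]

lemma g1U_ode (n : ℕ) (hn1 : 1 ≤ n) (y : ℝ) (hy : y ∈ Set.Ioo (-1:ℝ) 1) :
    2 * y * g1U n y = -(Real.sqrt (1-y^2) * (2 * cval n y)) := by
  have key : ∑ m ∈ Finset.Icc (-(n:ℤ)) (n:ℤ), (2 * (m:ℝ) * y * Ulm (n:ℤ) m y) * Ulm (n:ℤ) m y
      = ∑ m ∈ Finset.Icc (-(n:ℤ)) (n:ℤ), (-Real.sqrt (1-y^2) *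
          (aST n m * Ulm (n:ℤ) (m+1) y + bST n m * Ulm (n:ℤ) (m-1) y)) * Ulm (n:ℤ) m y := by
    apply Finset.sum_congr rfl
    intro m hm
    obtain ⟨h1, h2⟩ := Finset.mem_Icc.mp hm
    rw [R2 n hn1 m h1 h2 y hy]
  have e1 : ∑ m ∈ Finset.Icc (-(n:ℤ)) (n:ℤ), (2 * (m:ℝ) * y * Ulm (n:ℤ) m y) * Ulm (n:ℤ) m y
      = 2 * y * g1U n y := by
    rw [g1U, Finset.mul_sum]
    apply Finset.sum_congr rfl
    intro m hm
    ring
  have e2 : ∑ m ∈ Finset.Icc (-(n:ℤ)) (n:ℤ), (-Real.sqrt (1-y^2) *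
        (aST n m * Ulm (n:ℤ) (m+1) y + bST n m * Ulm (n:ℤ) (m-1) y)) * Ulm (n:ℤ) m y
      = -(Real.sqrt (1-y^2) * (2 * cval n y)) := by
    rw [← S_sum n y, Finset.mul_sum, ← Finset.sum_neg_distrib]
    apply Finset.sum_congr rfl
    intro m hm
    ring
  rw [← e1, key, e2]

lemma const_on_Ioo {f : ℝ → ℝ} (hf : ∀ y ∈ Set.Ioo (-1:ℝ) 1, HasDerivAt f 0 y) :
    ∀ x ∈ Set.Ioo (-1:ℝ) 1, ∀ z ∈ Set.Ioo (-1:ℝ) 1, f x = f z := by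
  intro x hx z hz
  apply (convex_Ioo (-1:ℝ) 1).is_const_of_fderivWithin_eq_zero
    (fun y hy => (hf y hy).differentiableAt.differentiableWithinAt) ?_ hx hz
  intro y hy
  rw [fderivWithin_of_isOpen isOpen_Ioo hy, (hf y hy).hasFDerivAt.fderiv]
  ext t
  simp

-- ---------- limits at 1 ----------

open Polynomial in
lemma clm0_sq (n : ℕ) : clm (n:ℤ) 0 ^ 2 = (2*(n:ℝ)+1)/2 := by
  rw [clm]
  rw [Real.sq_sqrt]
  · simp only [sub_zero, add_zero, Int.toNat_natCast]
    rw [mul_div_assoc, div_self (fact_cast_ne n), mul_one]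
    push_cast
    ring
  · positivity

lemma tendsto_one_sub_sq :
    Filter.Tendsto (fun y:ℝ => 1 - y^2) (nhdsWithin 1 (Set.Ioo (-1:ℝ) 1)) (nhds 0) := by
  have hc : Continuous fun y:ℝ => 1 - y^2 := by continuity
  have h := hc.tendsto 1
  norm_num at h
  exact h.mono_left nhdsWithin_le_nhds

lemma tendsto_rpow0 (c : ℝ) (hc : 0 < c) :
    Filter.Tendsto (fun y:ℝ => (1-y^2) ^ c) (nhdsWithin 1 (Set.Ioo (-1:ℝ) 1)) (nhds 0) := by
  have hcont : ContinuousAt (fun t:ℝ => t ^ c) 0 :=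
    Real.continuousAt_rpow_const 0 c (Or.inr hc.le)
  have h := hcont.tendsto.comp tendsto_one_sub_sq
  rw [Real.zero_rpow hc.ne'] at h
  exact h

lemma exists_tendsto_rpow (c : ℝ) (hc : 0 ≤ c) :
    ∃ L, Filter.Tendsto (fun y:ℝ => (1-y^2) ^ c) (nhdsWithin 1 (Set.Ioo (-1:ℝ) 1)) (nhds L) := by
  rcases hc.eq_or_lt with h | h
  · refine ⟨1, ?_⟩
    have hfun : (fun y:ℝ => (1-y^2)^c) = fun _ => (1:ℝ) := by
      funext y; rw [← h, Real.rpow_zero]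
    rw [hfun]
    exact tendsto_const_nhds
  · exact ⟨0, tendsto_rpow0 c h⟩

open Polynomial in
lemma tendsto_eval (p : ℝ[X]) :
    Filter.Tendsto (fun y:ℝ => p.eval y) (nhdsWithin 1 (Set.Ioo (-1:ℝ) 1)) (nhds (p.eval 1)) :=
  ((p.continuous).tendsto 1).mono_left nhdsWithin_le_nhds

open Polynomial in
lemma Ulm_neg_eq (n : ℕ) (m : ℤ) (h1 : -(n:ℤ) ≤ m) (h2 : m < 0) (y : ℝ)
    (hy : y ∈ Set.Ioo (-1:ℝ) 1) :
    Ulm (n:ℤ) m y = clm (n:ℤ) m * ((-1:ℝ)^m / ((2:ℝ)^n * (n.factorial : ℝ)))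
      * (-1:ℝ)^(n - ((n:ℤ)+m).toNat)
      * ((1 - y^2) ^ ((m:ℝ)/2 + (n - ((n:ℤ)+m).toNat : ℕ))
          * (Classical.choose (Qfac n ((n:ℤ)+m).toNat (by omega))).eval y) := by
  have hs : (0:ℝ) < 1 - y^2 := by obtain ⟨hy1, hy2⟩ := hy; nlinarith
  have hk : ((n:ℤ)+m).toNat ≤ n := by omega
  obtain ⟨hp, hv⟩ := Classical.choose_spec (Qfac n ((n:ℤ)+m).toNat (by omega))
  set p := Classical.choose (Qfac n ((n:ℤ)+m).toNat (by omega))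
  set j : ℕ := n - ((n:ℤ)+m).toNat with hj
  rw [Ulm_eq n m h1 (by omega) y, hp]
  simp only [eval_mul, eval_pow, eval_sub, eval_one, eval_X]
  have hneg : (y^2 - 1)^j = (-1:ℝ)^j * (1-y^2)^j := by
    rw [show (y^2 - 1 : ℝ) = -(1 - y^2) from by ring, neg_pow]
  rw [hneg]
  have hcomb : (1 - y^2) ^ ((m:ℝ)/2) * (1-y^2)^j = (1 - y^2) ^ ((m:ℝ)/2 + (j:ℕ)) := by
    rw [← Real.rpow_natCast (1-y^2) j, ← Real.rpow_add hs]
  rw [← hcomb]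
  ring

open Polynomial in
lemma tendsto_Usq (n : ℕ) (hn1 : 1 ≤ n) (m : ℤ) (h1 : -(n:ℤ) ≤ m) (h2 : m ≤ (n:ℤ)) :
    Filter.Tendsto (fun y => (Ulm (n:ℤ) m y)^2) (nhdsWithin 1 (Set.Ioo (-1:ℝ) 1))
      (nhds (if m = 0 then (2*(n:ℝ)+1)/2 else 0)) := by
  rcases lt_trichotomy m 0 with hm | hm | hm
  · rw [if_neg hm.ne]
    have hfac : ((n:ℤ)+m).toNat ≤ n := by omega
    set p := Classical.choose (Qfac n ((n:ℤ)+m).toNat (by omega)) with hpdef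
    set j : ℕ := n - ((n:ℤ)+m).toNat with hj
    have hje : (0:ℝ) < (m:ℝ)/2 + (j:ℕ) := by
      have hjz : (j:ℤ) = -m := by omega
      have : (j:ℝ) = -(m:ℝ) := by exact_mod_cast congrArg (fun z:ℤ => (z:ℝ)) hjz
      rw [this]
      have : (m:ℝ) < 0 := by exact_mod_cast hm
      linarith
    have hT : Filter.Tendsto (fun y => clm (n:ℤ) m * ((-1:ℝ)^m / ((2:ℝ)^n * (n.factorial : ℝ)))
        * (-1:ℝ)^j * ((1 - y^2) ^ ((m:ℝ)/2 + (j:ℕ)) * p.eval y))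
        (nhdsWithin 1 (Set.Ioo (-1:ℝ) 1)) (nhds 0) := by
      have := (tendsto_const_nhds (x := clm (n:ℤ) m * ((-1:ℝ)^m / ((2:ℝ)^n * (n.factorial : ℝ)))
        * (-1:ℝ)^j)).mul ((tendsto_rpow0 _ hje).mul (tendsto_eval p))
      simpa using this
    have hcongr : Filter.Tendsto (fun y => Ulm (n:ℤ) m y)
        (nhdsWithin 1 (Set.Ioo (-1:ℝ) 1)) (nhds 0) := by
      apply hT.congr'
      filter_upwards [eventually_mem_nhdsWithin] with y hy
      exact (Ulm_neg_eq n m h1 hm y hy).symm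
    simpa using hcongr.pow 2
  · subst hm
    rw [if_pos rfl]
    have hU : ∀ y, Ulm (n:ℤ) 0 y = clm (n:ℤ) 0 * (1 / ((2:ℝ)^n * (n.factorial : ℝ)))
        * (Q n n).eval y := by
      intro y
      rw [Ulm_eq n 0 (by omega) (by omega) y]
      norm_num [Real.rpow_zero]
    have hT : Filter.Tendsto (fun y => Ulm (n:ℤ) 0 y) (nhdsWithin 1 (Set.Ioo (-1:ℝ) 1))
        (nhds (clm (n:ℤ) 0)) := by
      have hval : clm (n:ℤ) 0 * (1 / ((2:ℝ)^n * (n.factorial : ℝ))) * (Q n n).eval 1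
          = clm (n:ℤ) 0 := by
        rw [Qeval_one]
        have hne : ((2:ℝ)^n * (n.factorial : ℝ)) ≠ 0 := by positivity
        field_simp
      have h := (tendsto_const_nhds (x := clm (n:ℤ) 0 * (1 / ((2:ℝ)^n * (n.factorial : ℝ))))).mul
        (tendsto_eval (Q n n))
      rw [hval] at h
      exact h.congr (fun y => (hU y).symm)
    have := hT.pow 2
    rwa [clm0_sq n] at this
  · rw [if_neg hm.ne']
    have hT : Filter.Tendsto (fun y => clm (n:ℤ) m * ((-1:ℝ)^m / ((2:ℝ)^n * (n.factorial : ℝ)))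
        * ((1 - y^2) ^ ((m:ℝ)/2) * (Q n ((n:ℤ)+m).toNat).eval y))
        (nhdsWithin 1 (Set.Ioo (-1:ℝ) 1)) (nhds 0) := by
      have hpos : (0:ℝ) < (m:ℝ)/2 := by
        have : (0:ℝ) < (m:ℝ) := by exact_mod_cast hm
        linarith
      have := (tendsto_const_nhds (x := clm (n:ℤ) m *
        ((-1:ℝ)^m / ((2:ℝ)^n * (n.factorial : ℝ))))).mul
        ((tendsto_rpow0 _ hpos).mul (tendsto_eval (Q n ((n:ℤ)+m).toNat)))
      simpa using this
    have hcongr : Filter.Tendsto (fun y => Ulm (n:ℤ) m y)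
        (nhdsWithin 1 (Set.Ioo (-1:ℝ) 1)) (nhds 0) := by
      refine Filter.Tendsto.congr (fun y => ?_) hT
      rw [Ulm_eq n m h1 h2 y, mul_assoc]
    simpa using hcongr.pow 2

lemma gU_tendsto (n : ℕ) (hn1 : 1 ≤ n) :
    Filter.Tendsto (gU n) (nhdsWithin 1 (Set.Ioo (-1:ℝ) 1)) (nhds ((2*(n:ℝ)+1)/2)) := by
  have h := tendsto_finset_sum (Finset.Icc (-(n:ℤ)) (n:ℤ))
    (fun m hm => tendsto_Usq n hn1 m (Finset.mem_Icc.mp hm).1 (Finset.mem_Icc.mp hm).2)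
  have hsum : (∑ m ∈ Finset.Icc (-(n:ℤ)) (n:ℤ), if m = 0 then (2*(n:ℝ)+1)/2 else 0)
      = (2*(n:ℝ)+1)/2 := by
    rw [Finset.sum_ite_eq' (Finset.Icc (-(n:ℤ)) (n:ℤ)) 0 (fun _ => (2*(n:ℝ)+1)/2)]
    rw [if_pos (Finset.mem_Icc.mpr (by omega))]
  rw [hsum] at h
  exact h

lemma gU_eq (n : ℕ) (hn1 : 1 ≤ n) (x : ℝ) (hx : x ∈ Set.Ioo (-1:ℝ) 1) :
    gU n x = (2*(n:ℝ)+1)/2 := by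
  have hconst := const_on_Ioo (f := gU n) (fun y hy => by
    have h := gU_hasDerivAt n y hy
    rwa [gU_deriv_sum_zero n hn1 y hy] at h)
  have hev : gU n =ᶠ[nhdsWithin 1 (Set.Ioo (-1:ℝ) 1)] (fun _ => gU n x) := by
    filter_upwards [eventually_mem_nhdsWithin] with y hy
    exact hconst y hy x hx
  have h2 : Filter.Tendsto (gU n) (nhdsWithin 1 (Set.Ioo (-1:ℝ) 1)) (nhds (gU n x)) := by
    rw [Filter.tendsto_congr' hev]
    exact tendsto_const_nhds
  have hne : (nhdsWithin (1:ℝ) (Set.Ioo (-1:ℝ) 1)).NeBot :=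
    right_nhdsWithin_Ioo_neBot (by norm_num)
  exact tendsto_nhds_unique h2 (gU_tendsto n hn1)

-- ---------- g1U vanishes ----------

lemma rpow_sq_inv (s : ℝ) (hs : 0 < s) (e : ℝ) : (s^e)^2 * s⁻¹ = s^(2*e-1) := by
  rw [← Real.rpow_neg_one s, sq, ← Real.rpow_add hs, ← Real.rpow_add hs]
  norm_num
  ring_nf

open Polynomial in
lemma tendsto_term (n : ℕ) (hn1 : 1 ≤ n) (m : ℤ) :
    ∃ L, Filter.Tendsto (fun y => (m:ℝ) * ((Ulm (n:ℤ) m y)^2 * (1-y^2)⁻¹))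
      (nhdsWithin 1 (Set.Ioo (-1:ℝ) 1)) (nhds L) := by
  by_cases hb : -(n:ℤ) ≤ m ∧ m ≤ (n:ℤ)
  · obtain ⟨h1, h2⟩ := hb
    rcases lt_trichotomy m 0 with hm | hm | hm
    · -- m < 0
      set k : ℕ := ((n:ℤ)+m).toNat with hk
      set p := Classical.choose (Qfac n k (by omega)) with hpdef
      set j : ℕ := n - k with hj
      have hjr : (j:ℝ) = -(m:ℝ) := by
        have hjz : (j:ℤ) = -m := by omega
        exact_mod_cast congrArg (fun z:ℤ => (z:ℝ)) hjz
      have hexp : (0:ℝ) ≤ 2*((m:ℝ)/2 + (j:ℕ)) - 1 := by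
        rw [hjr]
        have hm1 : m ≤ -1 := by omega
        have : (m:ℝ) ≤ -1 := by exact_mod_cast hm1
        linarith
      obtain ⟨L0, hL0⟩ := exists_tendsto_rpow _ hexp
      refine ⟨(m:ℝ) * ((clm (n:ℤ) m * ((-1:ℝ)^m / ((2:ℝ)^n * (n.factorial : ℝ)))
        * (-1:ℝ)^j)^2 * (L0 * (p.eval 1)^2)), ?_⟩
      have hT := (tendsto_const_nhds (x := (m:ℝ))).mul
        ((tendsto_const_nhds (x := (clm (n:ℤ) m * ((-1:ℝ)^m / ((2:ℝ)^n * (n.factorial : ℝ)))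
          * (-1:ℝ)^j)^2)).mul (hL0.mul ((tendsto_eval p).pow 2)))
      apply hT.congr'
      filter_upwards [eventually_mem_nhdsWithin] with y hy
      have hs : (0:ℝ) < 1 - y^2 := by obtain ⟨hy1, hy2⟩ := hy; nlinarith
      rw [Ulm_neg_eq n m h1 hm y hy]
      rw [mul_pow, mul_pow]
      rw [← rpow_sq_inv (1-y^2) hs ((m:ℝ)/2 + (j:ℕ))]
      ring
    · subst hm
      exact ⟨0, by simpa using (tendsto_const_nhds (x := (0:ℝ)))⟩
    · -- 0 < m
      have hexp : (0:ℝ) ≤ 2*((m:ℝ)/2) - 1 := by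
        have : (1:ℝ) ≤ (m:ℝ) := by exact_mod_cast hm
        linarith
      obtain ⟨L0, hL0⟩ := exists_tendsto_rpow _ hexp
      refine ⟨(m:ℝ) * ((clm (n:ℤ) m * ((-1:ℝ)^m / ((2:ℝ)^n * (n.factorial : ℝ))))^2
        * (L0 * ((Q n ((n:ℤ)+m).toNat).eval 1)^2)), ?_⟩
      have hT := (tendsto_const_nhds (x := (m:ℝ))).mul
        ((tendsto_const_nhds (x := (clm (n:ℤ) m * ((-1:ℝ)^m / ((2:ℝ)^n * (n.factorial : ℝ))))^2)).mul
          (hL0.mul ((tendsto_eval (Q n ((n:ℤ)+m).toNat)).pow 2)))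
      apply hT.congr'
      filter_upwards [eventually_mem_nhdsWithin] with y hy
      have hs : (0:ℝ) < 1 - y^2 := by obtain ⟨hy1, hy2⟩ := hy; nlinarith
      rw [Ulm_eq n m h1 h2 y]
      rw [mul_pow, mul_pow]
      rw [← rpow_sq_inv (1-y^2) hs ((m:ℝ)/2)]
      ring
  · refine ⟨0, ?_⟩
    have habs : ¬ |m| ≤ (n:ℤ) := by
      rw [abs_le]; tauto
    have hz : ∀ y : ℝ, (m:ℝ) * ((Ulm (n:ℤ) m y)^2 * (1-y^2)⁻¹) = 0 := by
      intro y
      rw [Ulm, if_neg habs]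
      ring
    have : (fun y => (m:ℝ) * ((Ulm (n:ℤ) m y)^2 * (1-y^2)⁻¹)) = fun _ => (0:ℝ) := funext hz
    rw [this]
    exact tendsto_const_nhds

lemma g1U_div_tendsto (n : ℕ) (hn1 : 1 ≤ n) :
    ∃ L, Filter.Tendsto (fun y => g1U n y * (1-y^2)⁻¹)
      (nhdsWithin 1 (Set.Ioo (-1:ℝ) 1)) (nhds L) := by
  choose L hL using tendsto_term n hn1
  refine ⟨∑ m ∈ Finset.Icc (-(n:ℤ)) (n:ℤ), L m, ?_⟩
  have h := tendsto_finset_sum (Finset.Icc (-(n:ℤ)) (n:ℤ)) (fun m _ => hL m)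
  apply h.congr
  intro y
  rw [g1U, Finset.sum_mul]
  apply Finset.sum_congr rfl
  intro m hm
  ring

lemma g3_deriv_zero (n : ℕ) (hn1 : 1 ≤ n) (y : ℝ) (hy : y ∈ Set.Ioo (-1:ℝ) 1) :
    HasDerivAt (fun t => (g1U n t)^2 * (1-t^2)⁻¹) 0 y := by
  have hs : (0:ℝ) < 1 - y^2 := by obtain ⟨hy1, hy2⟩ := hy; nlinarith
  have hrt : Real.sqrt (1-y^2) * Real.sqrt (1-y^2) = 1-y^2 := Real.mul_self_sqrt hs.le
  set D1 : ℝ := ∑ m ∈ Finset.Icc (-(n:ℤ)) (n:ℤ), (m:ℝ) * (2 * Ulm (n:ℤ) m y * deriv (Ulm (n:ℤ) m) y)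
    with hD1
  have hg1 : HasDerivAt (g1U n) D1 y := g1U_hasDerivAt n y hy
  have e1 := g1U_deriv_sum n hn1 y hy
  have e2 := g1U_ode n hn1 y hy
  rw [← hD1] at e1
  have h4 : (1-y^2) * D1 + y * g1U n y = 0 := by
    linear_combination Real.sqrt (1-y^2) * e1 + (1/2) * e2 - D1 * hrt
  have hi : HasDerivAt (fun t:ℝ => 1 - t^2) (-(2*y)) y := by
    simpa using ((hasDerivAt_pow 2 y).const_sub 1)
  have hinv := hi.inv hs.ne'
  have hsq := hg1.pow 2
  have hprod := hsq.mul hinv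
  refine hprod.congr_deriv ?_
  have : ((2:ℕ):ℝ) * g1U n y ^ (2-1) * D1 * (1 - y^2)⁻¹ + (g1U n y)^2 * (-(-(2*y)) / (1-y^2)^2)
      = (2 * g1U n y * ((1-y^2) * D1 + y * g1U n y)) / (1-y^2)^2 := by
    field_simp
    ring
  refine this.trans ?_
  rw [h4]
  simp

lemma g3_tendsto (n : ℕ) (hn1 : 1 ≤ n) :
    Filter.Tendsto (fun t => (g1U n t)^2 * (1-t^2)⁻¹)
      (nhdsWithin 1 (Set.Ioo (-1:ℝ) 1)) (nhds 0) := by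
  obtain ⟨L, hL⟩ := g1U_div_tendsto n hn1
  have hT := tendsto_one_sub_sq.mul (hL.pow 2)
  rw [zero_mul] at hT
  apply hT.congr'
  filter_upwards [eventually_mem_nhdsWithin] with y hy
  have hs : (0:ℝ) < 1 - y^2 := by obtain ⟨hy1, hy2⟩ := hy; nlinarith
  field_simp

lemma g1U_zero (n : ℕ) (hn1 : 1 ≤ n) (x : ℝ) (hx : x ∈ Set.Ioo (-1:ℝ) 1) :
    g1U n x = 0 := by
  have hconst := const_on_Ioo (f := fun t => (g1U n t)^2 * (1-t^2)⁻¹)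
    (fun y hy => g3_deriv_zero n hn1 y hy)
  have hev : (fun t => (g1U n t)^2 * (1-t^2)⁻¹)
      =ᶠ[nhdsWithin 1 (Set.Ioo (-1:ℝ) 1)] (fun _ => (g1U n x)^2 * (1-x^2)⁻¹) := by
    filter_upwards [eventually_mem_nhdsWithin] with y hy
    exact hconst y hy x hx
  have h2 : Filter.Tendsto (fun t => (g1U n t)^2 * (1-t^2)⁻¹)
      (nhdsWithin 1 (Set.Ioo (-1:ℝ) 1)) (nhds ((g1U n x)^2 * (1-x^2)⁻¹)) := by
    rw [Filter.tendsto_congr' hev]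
    exact tendsto_const_nhds
  have hne : (nhdsWithin (1:ℝ) (Set.Ioo (-1:ℝ) 1)).NeBot :=
    right_nhdsWithin_Ioo_neBot (by norm_num)
  have hzero := tendsto_nhds_unique h2 (g3_tendsto n hn1)
  have hs : (0:ℝ) < 1 - x^2 := by obtain ⟨hx1, hx2⟩ := hx; nlinarith
  have : (g1U n x)^2 = 0 := by
    have hiv : (1-x^2)⁻¹ ≠ 0 := by positivity
    exact (mul_eq_zero.mp hzero).resolve_right hiv
  exact pow_eq_zero_iff (by norm_num) |>.mp this

lemma cval_zero (n : ℕ) (hn1 : 1 ≤ n) (x : ℝ) (hx : x ∈ Set.Ioo (-1:ℝ) 1) :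
    cval n x = 0 := by
  have hev : g1U n =ᶠ[nhds x] (fun _ => (0:ℝ)) := by
    filter_upwards [isOpen_Ioo.mem_nhds hx] with y hy
    exact g1U_zero n hn1 y hy
  have hzero : HasDerivAt (g1U n) 0 x :=
    (hasDerivAt_const x (0:ℝ)).congr_of_eventuallyEq hev
  have hD := g1U_hasDerivAt n x hx
  have : (∑ m ∈ Finset.Icc (-(n:ℤ)) (n:ℤ), (m:ℝ) * (2 * Ulm (n:ℤ) m x * deriv (Ulm (n:ℤ) m) x))
      = 0 := hD.unique hzero
  have h := g1U_deriv_sum n hn1 x hx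
  rw [this, mul_zero] at h
  exact h.symm

lemma msum_deriv_zero (n : ℕ) (hn1 : 1 ≤ n) (x : ℝ) (hx : x ∈ Set.Ioo (-1:ℝ) 1) :
    ∑ m ∈ Finset.Icc (-(n:ℤ)) (n:ℤ), (m:ℝ) * (2 * Ulm (n:ℤ) m x * deriv (Ulm (n:ℤ) m) x) = 0 := by
  have hev : g1U n =ᶠ[nhds x] (fun _ => (0:ℝ)) := by
    filter_upwards [isOpen_Ioo.mem_nhds hx] with y hy
    exact g1U_zero n hn1 y hy
  have hzero : HasDerivAt (g1U n) 0 x :=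
    (hasDerivAt_const x (0:ℝ)).congr_of_eventuallyEq hev
  exact (g1U_hasDerivAt n x hx).unique hzero

-- ---------- quadratic sums ----------

lemma S1sum (n : ℕ) (y : ℝ) :
    ∑ m ∈ Finset.Icc (-(n:ℤ)) (n:ℤ), (aST n m)^2 * (Ulm (n:ℤ) (m+1) y)^2
      = ∑ j ∈ Finset.Icc (-(n:ℤ)) (n:ℤ), ((n:ℝ)-(j:ℝ)+1)*((n:ℝ)+(j:ℝ)) * (Ulm (n:ℤ) j y)^2 := by
  have h1 : ∑ m ∈ Finset.Icc (-(n:ℤ)) (n:ℤ), (aST n m)^2 * (Ulm (n:ℤ) (m+1) y)^2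
      = ∑ m ∈ Finset.Icc (-(n:ℤ)) (n:ℤ),
          (fun (j:ℤ) => ((n:ℝ)-(j:ℝ)+1)*((n:ℝ)+(j:ℝ)) * (Ulm (n:ℤ) j y)^2) (m+1) := by
    apply Finset.sum_congr rfl
    intro m hm
    obtain ⟨hm1, hm2⟩ := Finset.mem_Icc.mp hm
    simp only
    rw [aST_sq n m hm1 hm2]
    push_cast
    ring
  rw [h1, reindex_up n (fun (j:ℤ) => ((n:ℝ)-(j:ℝ)+1)*((n:ℝ)+(j:ℝ)) * (Ulm (n:ℤ) j y)^2) ?_ ?_]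
  · push_cast; ring
  · push_cast; ring

lemma S2sum (n : ℕ) (y : ℝ) :
    ∑ m ∈ Finset.Icc (-(n:ℤ)) (n:ℤ), (bST n m)^2 * (Ulm (n:ℤ) (m-1) y)^2
      = ∑ j ∈ Finset.Icc (-(n:ℤ)) (n:ℤ), ((n:ℝ)+(j:ℝ)+1)*((n:ℝ)-(j:ℝ)) * (Ulm (n:ℤ) j y)^2 := by
  have h1 : ∑ m ∈ Finset.Icc (-(n:ℤ)) (n:ℤ), (bST n m)^2 * (Ulm (n:ℤ) (m-1) y)^2
      = ∑ m ∈ Finset.Icc (-(n:ℤ)) (n:ℤ),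
          (fun (j:ℤ) => ((n:ℝ)+(j:ℝ)+1)*((n:ℝ)-(j:ℝ)) * (Ulm (n:ℤ) j y)^2) (m-1) := by
    apply Finset.sum_congr rfl
    intro m hm
    obtain ⟨hm1, hm2⟩ := Finset.mem_Icc.mp hm
    simp only
    rw [bST_sq n m hm1 hm2]
    push_cast
    ring
  rw [h1, reindex_down n (fun (j:ℤ) => ((n:ℝ)+(j:ℝ)+1)*((n:ℝ)-(j:ℝ)) * (Ulm (n:ℤ) j y)^2) ?_ ?_]
  · push_cast; ring
  · push_cast; ring

end FlmAux

/-- Addition theorem for `F_{lm}`: `∑_{m=−l}^{l} F_{lm}(x)² = (2l+1)/2`. -/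
theorem Flm_addition_theorem (l : ℤ) (hl : 1 ≤ l) (x : ℝ)
    (hx : x ∈ Set.Ioo (-1 : ℝ) 1) :
    ∑ m ∈ Finset.Icc (-l) l, (Flm l m x) ^ 2 = (2 * (l : ℝ) + 1) / 2 := by
  classical
  open FlmAux in
  obtain ⟨n, rfl⟩ : ∃ n:ℕ, (n:ℤ) = l := ⟨l.toNat, Int.toNat_of_nonneg (by omega)⟩
  have hn1 : 1 ≤ n := by exact_mod_cast hl
  have hx1 := hx.1
  have hx2 := hx.2
  have hs : (0:ℝ) < 1 - x^2 := by nlinarith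
  set r : ℝ := Real.sqrt (1-x^2) with hrdef
  have hr : 0 < r := Real.sqrt_pos.mpr hs
  have hrt : r * r = 1 - x^2 := Real.mul_self_sqrt hs.le
  have hNpos : (0:ℝ) < ((n:ℤ):ℝ) * (((n:ℤ):ℝ)+1) := by
    have h0 : (0:ℝ) < ((n:ℤ):ℝ) := by exact_mod_cast (by omega : (0:ℤ) < (n:ℤ))
    nlinarith
  have hrtN : Real.sqrt (((n:ℤ):ℝ) * (((n:ℤ):ℝ)+1)) * Real.sqrt (((n:ℤ):ℝ) * (((n:ℤ):ℝ)+1))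
      = ((n:ℤ):ℝ) * (((n:ℤ):ℝ)+1) := Real.mul_self_sqrt hNpos.le
  have hrN : 0 < Real.sqrt (((n:ℤ):ℝ) * (((n:ℤ):ℝ)+1)) := Real.sqrt_pos.mpr hNpos
  -- step 1: per-m linearisation of Flm
  have hZ : ∀ m ∈ Finset.Icc (-(n:ℤ)) (n:ℤ),
      2 * r * Real.sqrt (((n:ℤ):ℝ) * (((n:ℤ):ℝ)+1)) * Flm (n:ℤ) m x
        = r * (bST n m * Ulm (n:ℤ) (m-1) x - aST n m * Ulm (n:ℤ) (m+1) x)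
          - 2*(m:ℝ)* Ulm (n:ℤ) m x := by
    intro m hm
    obtain ⟨hm1, hm2⟩ := Finset.mem_Icc.mp hm
    have e := R1 n hn1 m hm1 hm2 x hx
    rw [← hrdef] at e
    have hFm : Flm (n:ℤ) m x = (1/(Real.sqrt (((n:ℤ):ℝ) * (((n:ℤ):ℝ)+1)))) *
        (r * deriv (Ulm (n:ℤ) m) x - ((m:ℝ)/r) * Ulm (n:ℤ) m x) := by
      rw [Flm, ← hrdef]
    rw [hFm]
    have h7 : r * r⁻¹ = 1 := mul_inv_cancel₀ hr.ne'
    have h6 : Real.sqrt (((n:ℤ):ℝ) * (((n:ℤ):ℝ)+1)) *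
        (Real.sqrt (((n:ℤ):ℝ) * (((n:ℤ):ℝ)+1)))⁻¹ = 1 := mul_inv_cancel₀ hrN.ne'
    rw [show 2 * r * Real.sqrt (((n:ℤ):ℝ) * (((n:ℤ):ℝ)+1)) *
        ((1/(Real.sqrt (((n:ℤ):ℝ) * (((n:ℤ):ℝ)+1)))) *
          (r * deriv (Ulm (n:ℤ) m) x - ((m:ℝ)/r) * Ulm (n:ℤ) m x))
        = (Real.sqrt (((n:ℤ):ℝ) * (((n:ℤ):ℝ)+1)) * (Real.sqrt (((n:ℤ):ℝ) * (((n:ℤ):ℝ)+1)))⁻¹) *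
            (2 * r * (r * deriv (Ulm (n:ℤ) m) x))
          - (Real.sqrt (((n:ℤ):ℝ) * (((n:ℤ):ℝ)+1)) * (Real.sqrt (((n:ℤ):ℝ) * (((n:ℤ):ℝ)+1)))⁻¹) *
              ((r * r⁻¹) * (2 * (m:ℝ) * Ulm (n:ℤ) m x)) from by ring]
    rw [h6, h7]
    linear_combination r * e
  -- step 2: squares
  have hsq : ∀ m ∈ Finset.Icc (-(n:ℤ)) (n:ℤ),
      4 * (1-x^2) * (((n:ℤ):ℝ) * (((n:ℤ):ℝ)+1)) * (Flm (n:ℤ) m x)^2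
        = (r * (bST n m * Ulm (n:ℤ) (m-1) x - aST n m * Ulm (n:ℤ) (m+1) x)
            - 2*(m:ℝ)* Ulm (n:ℤ) m x)^2 := by
    intro m hm
    have h2 := hZ m hm
    calc 4 * (1-x^2) * (((n:ℤ):ℝ) * (((n:ℤ):ℝ)+1)) * (Flm (n:ℤ) m x)^2
        = 4*((r*r)*((Real.sqrt (((n:ℤ):ℝ) * (((n:ℤ):ℝ)+1)) *
            Real.sqrt (((n:ℤ):ℝ) * (((n:ℤ):ℝ)+1))) * (Flm (n:ℤ) m x)^2)) := by
          rw [hrt, hrtN]; ring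
      _ = (2 * r * Real.sqrt (((n:ℤ):ℝ) * (((n:ℤ):ℝ)+1)) * Flm (n:ℤ) m x)^2 := by ring
      _ = _ := by rw [h2]
  -- step 3: sum the squared identity
  have hsum1 : 4 * (1-x^2) * (((n:ℤ):ℝ) * (((n:ℤ):ℝ)+1)) *
      ∑ m ∈ Finset.Icc (-(n:ℤ)) (n:ℤ), (Flm (n:ℤ) m x)^2
      = ∑ m ∈ Finset.Icc (-(n:ℤ)) (n:ℤ),
          (r * (bST n m * Ulm (n:ℤ) (m-1) x - aST n m * Ulm (n:ℤ) (m+1) x)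
            - 2*(m:ℝ)* Ulm (n:ℤ) m x)^2 := by
    rw [Finset.mul_sum]
    exact Finset.sum_congr rfl hsq
  -- step 4: expand the square, per m
  have hexp : ∀ m ∈ Finset.Icc (-(n:ℤ)) (n:ℤ),
      (r * (bST n m * Ulm (n:ℤ) (m-1) x - aST n m * Ulm (n:ℤ) (m+1) x)
        - 2*(m:ℝ)* Ulm (n:ℤ) m x)^2
      = (1-x^2) * (bST n m * Ulm (n:ℤ) (m-1) x - aST n m * Ulm (n:ℤ) (m+1) x)^2
        - 4*r*((m:ℝ) * Ulm (n:ℤ) m x *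
            (bST n m * Ulm (n:ℤ) (m-1) x - aST n m * Ulm (n:ℤ) (m+1) x))
        + (1-x^2) * (aST n m * Ulm (n:ℤ) (m+1) x + bST n m * Ulm (n:ℤ) (m-1) x)^2
        + (1-x^2) * (4*(m:ℝ)^2*(Ulm (n:ℤ) m x)^2) := by
    intro m hm
    obtain ⟨hm1, hm2⟩ := Finset.mem_Icc.mp hm
    have e2 := R2 n hn1 m hm1 hm2 x hx
    rw [← hrdef] at e2
    linear_combination ((bST n m * Ulm (n:ℤ) (m-1) x - aST n m * Ulm (n:ℤ) (m+1) x)^2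
        + (aST n m * Ulm (n:ℤ) (m+1) x + bST n m * Ulm (n:ℤ) (m-1) x)^2) * hrt
      + (2*(m:ℝ)*x*Ulm (n:ℤ) m x
          - r * (aST n m * Ulm (n:ℤ) (m+1) x + bST n m * Ulm (n:ℤ) (m-1) x)) * e2
  have hsum2 : ∑ m ∈ Finset.Icc (-(n:ℤ)) (n:ℤ),
      (r * (bST n m * Ulm (n:ℤ) (m-1) x - aST n m * Ulm (n:ℤ) (m+1) x)
        - 2*(m:ℝ)* Ulm (n:ℤ) m x)^2
      = (1-x^2) * (∑ m ∈ Finset.Icc (-(n:ℤ)) (n:ℤ),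
          ((bST n m * Ulm (n:ℤ) (m-1) x - aST n m * Ulm (n:ℤ) (m+1) x)^2
            + (aST n m * Ulm (n:ℤ) (m+1) x + bST n m * Ulm (n:ℤ) (m-1) x)^2
            + 4*(m:ℝ)^2*(Ulm (n:ℤ) m x)^2))
        - 4*r*(∑ m ∈ Finset.Icc (-(n:ℤ)) (n:ℤ), (m:ℝ) * Ulm (n:ℤ) m x *
            (bST n m * Ulm (n:ℤ) (m-1) x - aST n m * Ulm (n:ℤ) (m+1) x)) := by
    rw [Finset.sum_congr rfl hexp, Finset.mul_sum, Finset.mul_sum, ← Finset.sum_sub_distrib]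
    apply Finset.sum_congr rfl
    intro m hm
    ring
  -- step 5: the odd cross-sum vanishes
  have hcross : ∑ m ∈ Finset.Icc (-(n:ℤ)) (n:ℤ), (m:ℝ) * Ulm (n:ℤ) m x *
      (bST n m * Ulm (n:ℤ) (m-1) x - aST n m * Ulm (n:ℤ) (m+1) x) = 0 := by
    rw [m_cross n x]
    exact cval_zero n hn1 x hx
  -- step 6: the quadratic sum
  have hquad : ∑ m ∈ Finset.Icc (-(n:ℤ)) (n:ℤ),
      ((bST n m * Ulm (n:ℤ) (m-1) x - aST n m * Ulm (n:ℤ) (m+1) x)^2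
        + (aST n m * Ulm (n:ℤ) (m+1) x + bST n m * Ulm (n:ℤ) (m-1) x)^2
        + 4*(m:ℝ)^2*(Ulm (n:ℤ) m x)^2)
      = 4 * ((n:ℝ) * ((n:ℝ)+1)) * gU n x := by
    have hper : ∀ m ∈ Finset.Icc (-(n:ℤ)) (n:ℤ),
        (bST n m * Ulm (n:ℤ) (m-1) x - aST n m * Ulm (n:ℤ) (m+1) x)^2
          + (aST n m * Ulm (n:ℤ) (m+1) x + bST n m * Ulm (n:ℤ) (m-1) x)^2
          + 4*(m:ℝ)^2*(Ulm (n:ℤ) m x)^2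
        = 2 * ((aST n m)^2 * (Ulm (n:ℤ) (m+1) x)^2)
          + 2 * ((bST n m)^2 * (Ulm (n:ℤ) (m-1) x)^2)
          + 4*(m:ℝ)^2*(Ulm (n:ℤ) m x)^2 := by
      intro m hm
      ring
    calc ∑ m ∈ Finset.Icc (-(n:ℤ)) (n:ℤ),
        ((bST n m * Ulm (n:ℤ) (m-1) x - aST n m * Ulm (n:ℤ) (m+1) x)^2
          + (aST n m * Ulm (n:ℤ) (m+1) x + bST n m * Ulm (n:ℤ) (m-1) x)^2
          + 4*(m:ℝ)^2*(Ulm (n:ℤ) m x)^2)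
        = (∑ m ∈ Finset.Icc (-(n:ℤ)) (n:ℤ), 2 * ((aST n m)^2 * (Ulm (n:ℤ) (m+1) x)^2))
          + (∑ m ∈ Finset.Icc (-(n:ℤ)) (n:ℤ), 2 * ((bST n m)^2 * (Ulm (n:ℤ) (m-1) x)^2))
          + ∑ m ∈ Finset.Icc (-(n:ℤ)) (n:ℤ), 4*(m:ℝ)^2*(Ulm (n:ℤ) m x)^2 := by
          rw [← Finset.sum_add_distrib, ← Finset.sum_add_distrib]
          exact Finset.sum_congr rfl hper
      _ = 2 * (∑ m ∈ Finset.Icc (-(n:ℤ)) (n:ℤ), (aST n m)^2 * (Ulm (n:ℤ) (m+1) x)^2)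
          + 2 * (∑ m ∈ Finset.Icc (-(n:ℤ)) (n:ℤ), (bST n m)^2 * (Ulm (n:ℤ) (m-1) x)^2)
          + ∑ m ∈ Finset.Icc (-(n:ℤ)) (n:ℤ), 4*(m:ℝ)^2*(Ulm (n:ℤ) m x)^2 := by
          rw [Finset.mul_sum, Finset.mul_sum]
      _ = 2 * (∑ j ∈ Finset.Icc (-(n:ℤ)) (n:ℤ), ((n:ℝ)-(j:ℝ)+1)*((n:ℝ)+(j:ℝ)) * (Ulm (n:ℤ) j x)^2)
          + 2 * (∑ j ∈ Finset.Icc (-(n:ℤ)) (n:ℤ), ((n:ℝ)+(j:ℝ)+1)*((n:ℝ)-(j:ℝ)) * (Ulm (n:ℤ) j x)^2)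
          + ∑ m ∈ Finset.Icc (-(n:ℤ)) (n:ℤ), 4*(m:ℝ)^2*(Ulm (n:ℤ) m x)^2 := by
          rw [S1sum n x, S2sum n x]
      _ = 4 * ((n:ℝ) * ((n:ℝ)+1)) * gU n x := by
          rw [gU, Finset.mul_sum, Finset.mul_sum, Finset.mul_sum,
            ← Finset.sum_add_distrib, ← Finset.sum_add_distrib]
          apply Finset.sum_congr rfl
          intro m hm
          ring
  -- step 7: assemble
  have hG := gU_eq n hn1 x hx
  have hfinal : 4 * (1-x^2) * (((n:ℤ):ℝ) * (((n:ℤ):ℝ)+1)) *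
      ∑ m ∈ Finset.Icc (-(n:ℤ)) (n:ℤ), (Flm (n:ℤ) m x)^2
      = 4 * (1-x^2) * (((n:ℤ):ℝ) * (((n:ℤ):ℝ)+1)) * ((2*(n:ℝ)+1)/2) := by
    rw [hsum1, hsum2, hcross, hquad, hG]
    push_cast
    ring
  have hne : (4 * (1-x^2) * (((n:ℤ):ℝ) * (((n:ℤ):ℝ)+1))) ≠ 0 := by positivity
  have hA := mul_left_cancel₀ hne hfinal
  rw [hA]
  push_cast
  ring
end
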